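/- arXiv:1902.09712 — 3 statements merged into one kernel-verified Lean document; each statement's English description precedes it below -/
import Mathlib

section
/- Let m ≥ 1, D ≥ 1, and let g: ℤ^D → ℝ be a homogeneous polynomial of degree m, g(n) = Σ_{|j|=m} a_j n^j (multi-index notation). Then there exist C = C(D,m) > 0 and a positive integer Q = Q(D,m) such that: if ‖g(n)‖_𝕋 ≤ C₀ for all n ∈ ℤ^D with |n₁|+⋯+|n_D| ≤ m, then ‖Q a_j‖_𝕋 ≤ C₀·C for every multi-index j with |j| = m. (Here ‖·‖_𝕋 is the distance to the nearest integer.) One may take Q = (m!)^D and C = 2^D Q. -/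
/-- Distance of a real number to the nearest integer, `‖x‖_𝕋`. -/
noncomputable def torusNorm (x : ℝ) : ℝ := ⨅ k : ℤ, |x - (k : ℝ)|

open Finset fwdDiff Nat

lemma tn_bdd (x : ℝ) : BddBelow (Set.range fun k : ℤ => |x - (k : ℝ)|) :=
  ⟨0, by rintro y ⟨k, rfl⟩; exact abs_nonneg _⟩

lemma torusNorm_nonneg (x : ℝ) : 0 ≤ torusNorm x :=
  Real.iInf_nonneg fun _ => abs_nonneg _

lemma torusNorm_le (x : ℝ) (k : ℤ) : torusNorm x ≤ |x - k| := ciInf_le (tn_bdd x) k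

lemma torusNorm_zero : torusNorm (0 : ℝ) = 0 :=
  le_antisymm (by simpa using torusNorm_le 0 0) (torusNorm_nonneg 0)

lemma torusNorm_add_le (x y : ℝ) : torusNorm (x + y) ≤ torusNorm x + torusNorm y := by
  refine le_ciInf_add_ciInf fun k l => ?_
  calc torusNorm (x + y) ≤ |x + y - ((k + l : ℤ) : ℝ)| := torusNorm_le _ _
    _ ≤ |x - k| + |y - l| := by
        push_cast
        rw [show x + y - ((k : ℝ) + l) = (x - k) + (y - l) by ring]
        exact abs_add_le _ _

lemma torusNorm_int_mul (c : ℤ) (x : ℝ) : torusNorm ((c : ℝ) * x) ≤ |(c : ℝ)| * torusNorm x := by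
  have h : |(c : ℝ)| * torusNorm x = ⨅ k : ℤ, |(c : ℝ)| * |x - k| :=
    Real.mul_iInf_of_nonneg (abs_nonneg _) _
  rw [h]
  refine le_ciInf fun k => ?_
  calc torusNorm ((c : ℝ) * x) ≤ |(c : ℝ) * x - ((c * k : ℤ) : ℝ)| := torusNorm_le _ _
    _ = |(c : ℝ)| * |x - k| := by push_cast; rw [← mul_sub, abs_mul]

lemma torusNorm_sum_le {α : Type*} (s : Finset α) (f : α → ℝ) :
    torusNorm (∑ k ∈ s, f k) ≤ ∑ k ∈ s, torusNorm (f k) := by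
  classical
  induction s using Finset.induction with
  | empty => simp [torusNorm_zero]
  | insert _ _ h ih =>
      rw [Finset.sum_insert h, Finset.sum_insert h]
      exact (torusNorm_add_le _ _).trans (add_le_add_right ih _)

/-- `x ↦ x^e` as a function `ℕ → ℝ`. -/
def pw (e : ℕ) : ℕ → ℝ := fun x => (x : ℝ) ^ e

lemma fwdDiff_pw (e : ℕ) : fwdDiff 1 (pw e) = ∑ t ∈ range e, ((e.choose t : ℝ)) • pw t := by
  funext x
  simp only [fwdDiff, pw, Finset.sum_apply, Pi.smul_apply, smul_eq_mul]
  have h1 : ((x + 1 : ℕ) : ℝ) = (x : ℝ) + 1 := by push_cast; ring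
  rw [h1, add_pow, Finset.sum_range_succ]
  simp only [one_pow, mul_one, Nat.choose_self, Nat.cast_one, add_sub_cancel_right]
  exact Finset.sum_congr rfl fun t _ => by ring

lemma fwdDiff_pw_zero : ∀ d e, e ≤ d →
    (fwdDiff 1)^[d] (pw e) 0 = if e = d then (d ! : ℝ) else 0 := by
  intro d
  induction d with
  | zero =>
      intro e he
      interval_cases e
      simp [pw]
  | succ d ih =>
      intro e he
      rw [Function.iterate_succ_apply, fwdDiff_pw]
      rw [fwdDiff_iter_finset_sum]
      simp only [fwdDiff_iter_const_smul, Finset.sum_apply, Pi.smul_apply, smul_eq_mul]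
      have h2 : ∀ t ∈ range e, (e.choose t : ℝ) * (fwdDiff 1)^[d] (pw t) 0
          = if t = d then (e.choose t : ℝ) * d ! else 0 := by
        intro t ht
        have ht' : t < e := Finset.mem_range.mp ht
        rw [ih t (by omega)]
        split <;> simp
      rw [Finset.sum_congr rfl h2, Finset.sum_ite_eq' (range e) d (fun t => (e.choose t : ℝ) * d !)]
      by_cases he' : e = d + 1
      · subst he'
        rw [if_pos (Finset.mem_range.mpr (by omega)), if_pos rfl]
        rw [Nat.choose_succ_self_right, Nat.factorial_succ]
        push_cast; ring
      · rw [if_neg (by simp only [Finset.mem_range]; omega), if_neg he']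

lemma alt_sum_pow (d e : ℕ) :
    ∑ x ∈ range (d + 1), (-1 : ℝ) ^ (d - x) * (d.choose x : ℝ) * (x : ℝ) ^ e
      = (fwdDiff 1)^[d] (pw e) 0 := by
  rw [fwdDiff_iter_eq_sum_shift]
  refine Finset.sum_congr rfl fun x hx => ?_
  simp only [zsmul_eq_mul, pw, smul_eq_mul, mul_one, zero_add]
  push_cast
  ring

/-- If all the values of a homogeneous polynomial of degree `m` in `D`
variables are within `C₀` of integers at the points `n` with `|n₁|+⋯+|n_D| ≤ m`, then
all its coefficients, multiplied by a fixed positive integer `Q = Q(D,m)`, are within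
`C₀·C` of integers, where `C = C(D,m) > 0`. -/
theorem stmt9 (D m : ℕ) (hD : 1 ≤ D) (hm : 1 ≤ m) :
    ∃ (C : ℝ) (Q : ℕ), 0 < C ∧ 0 < Q ∧
      ∀ (a : (Fin D → ℕ) → ℝ) (C₀ : ℝ),
        (∀ n : Fin D → ℤ, (∑ i, |n i|) ≤ (m : ℤ) →
          torusNorm (∑ j ∈ (Fintype.piFinset fun _ : Fin D => Finset.range (m + 1)).filter
              (fun j => ∑ i, j i = m), a j * ∏ i, (n i : ℝ) ^ (j i)) ≤ C₀) →
        ∀ j : Fin D → ℕ, (∑ i, j i = m) → torusNorm ((Q : ℝ) * a j) ≤ C₀ * C := by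
  classical
  refine ⟨((m ! ^ D * 2 ^ m : ℕ) : ℝ), m ! ^ D,
    by exact_mod_cast Nat.pos_of_ne_zero (by positivity),
    pow_pos m.factorial_pos D, ?_⟩
  intro a C₀ hg j hj
  set J := (Fintype.piFinset fun _ : Fin D => Finset.range (m + 1)).filter
      (fun j => ∑ i, j i = m) with hJdef
  set g : (Fin D → ℤ) → ℝ := fun n => ∑ j' ∈ J, a j' * ∏ i, (n i : ℝ) ^ (j' i) with hgdef
  have hg' : ∀ n : Fin D → ℤ, (∑ i, |n i|) ≤ (m : ℤ) → torusNorm (g n) ≤ C₀ := fun n hn => hg n hn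
  have hjm : ∀ i, j i ≤ m := fun i =>
    hj ▸ Finset.single_le_sum (fun _ _ => Nat.zero_le _) (Finset.mem_univ i)
  have hjJ : j ∈ J := by
    rw [hJdef, Finset.mem_filter]
    exact ⟨Fintype.mem_piFinset.mpr fun i => Finset.mem_range.mpr (by have := hjm i; omega), hj⟩
  have hC₀ : 0 ≤ C₀ := le_trans (torusNorm_nonneg _) (hg' 0 (by simp))
  -- the cube of sample points
  set K := Fintype.piFinset fun i => Finset.range (j i + 1) with hKdef
  have hKmem : ∀ k ∈ K, ∀ i, k i ≤ j i := by
    intro k hk i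
    have := Fintype.mem_piFinset.mp hk i
    rw [Finset.mem_range] at this; omega
  -- real coefficients
  set cr : (Fin D → ℕ) → ℝ :=
    fun k => ∏ i, ((-1 : ℝ) ^ (j i - k i) * ((j i).choose (k i) : ℝ)) with hcrdef
  -- key identity
  have key : ∑ k ∈ K, cr k * g (fun i => (k i : ℤ)) = (∏ i, ((j i)! : ℝ)) * a j := by
    have step1 : ∀ k : Fin D → ℕ, cr k * g (fun i => (k i : ℤ))
        = ∑ j' ∈ J, a j' *
            ∏ i, ((-1 : ℝ) ^ (j i - k i) * ((j i).choose (k i) : ℝ) * (k i : ℝ) ^ (j' i)) := by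
      intro k
      rw [hgdef]
      simp only [Int.cast_natCast]
      rw [Finset.mul_sum]
      refine Finset.sum_congr rfl fun j' _ => ?_
      simp only [hcrdef]
      simp only [Finset.prod_mul_distrib]
      ring
    rw [Finset.sum_congr rfl fun k _ => step1 k, Finset.sum_comm]
    have step2 : ∀ j' : Fin D → ℕ,
        ∑ k ∈ K, a j' * ∏ i, ((-1 : ℝ) ^ (j i - k i) * ((j i).choose (k i) : ℝ) * (k i : ℝ) ^ (j' i))
          = a j' * ∏ i, (fwdDiff 1)^[j i] (pw (j' i)) 0 := by
      intro j'
      rw [← Finset.mul_sum, hKdef, ← Finset.prod_univ_sum (fun i => Finset.range (j i + 1))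
        (fun i x => (-1 : ℝ) ^ (j i - x) * ((j i).choose x : ℝ) * (x : ℝ) ^ (j' i))]
      congr 1
      exact Finset.prod_congr rfl fun i _ => alt_sum_pow (j i) (j' i)
    rw [Finset.sum_congr rfl fun j' _ => step2 j']
    rw [Finset.sum_eq_single_of_mem j hjJ]
    · have hprod : ∏ i, (fwdDiff 1)^[j i] (pw (j i)) 0 = ∏ i, ((j i)! : ℝ) :=
        Finset.prod_congr rfl fun i _ => by rw [fwdDiff_pw_zero _ _ le_rfl, if_pos rfl]
      rw [hprod, mul_comm]
    · intro j' hj' hne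
      have hsum' : ∑ i, j' i = m := (Finset.mem_filter.mp hj').2
      have hex : ∃ i, j' i < j i := by
        by_contra hc
        push_neg at hc
        have heq : ∀ i ∈ Finset.univ, j i = j' i :=
          (Finset.sum_eq_sum_iff_of_le fun i _ => hc i).mp (by rw [hj, hsum'])
        exact hne (funext fun i => (heq i (Finset.mem_univ i)).symm)
      obtain ⟨i0, hi0⟩ := hex
      rw [Finset.prod_eq_zero (Finset.mem_univ i0)
        (by rw [fwdDiff_pw_zero _ _ (le_of_lt hi0), if_neg (Nat.ne_of_lt hi0)]), mul_zero]
  -- integer coefficients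
  set c : (Fin D → ℕ) → ℤ :=
    fun k => ∏ i, ((-1 : ℤ) ^ (j i - k i) * ((j i).choose (k i) : ℤ)) with hcdef
  have hcr : ∀ k, ((c k : ℤ) : ℝ) = cr k := by
    intro k
    rw [hcdef, hcrdef]
    push_cast
    rfl
  -- divisibility
  have hdvd : (∏ i, (j i)!) ∣ m ! ^ D := by
    calc (∏ i, (j i)!) ∣ ∏ _i : Fin D, m ! :=
          Finset.prod_dvd_prod_of_dvd _ _ fun i _ => Nat.factorial_dvd_factorial (hjm i)
      _ = m ! ^ D := by rw [Finset.prod_const, Finset.card_univ, Fintype.card_fin]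
  set q : ℕ := m ! ^ D / ∏ i, (j i)! with hqdef
  have hq : q * ∏ i, (j i)! = m ! ^ D := Nat.div_mul_cancel hdvd
  have hqle : q ≤ m ! ^ D := Nat.div_le_self _ _
  -- the representation of Q * a j
  have hQa : ((m ! ^ D : ℕ) : ℝ) * a j
      = ∑ k ∈ K, (((q : ℤ) * c k : ℤ) : ℝ) * g (fun i => (k i : ℤ)) := by
    have : ∀ k, (((q : ℤ) * c k : ℤ) : ℝ) = (q : ℝ) * cr k := by
      intro k; push_cast [hcr k]; ring
    rw [Finset.sum_congr rfl fun k _ => by rw [this k, mul_assoc]]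
    rw [← Finset.mul_sum, key, ← mul_assoc, ← hq]
    push_cast
    ring
  -- the bound on the sum of coefficient magnitudes
  have habs : ∀ k, |(((q : ℤ) * c k : ℤ) : ℝ)| = (q : ℝ) * ∏ i, ((j i).choose (k i) : ℝ) := by
    intro k
    push_cast
    rw [abs_mul, Nat.abs_cast, hcr k, hcrdef, Finset.abs_prod]
    congr 1
    refine Finset.prod_congr rfl fun i _ => ?_
    rw [abs_mul, abs_pow, abs_neg, abs_one, one_pow, one_mul, Nat.abs_cast]
  have hsumabs : ∑ k ∈ K, |(((q : ℤ) * c k : ℤ) : ℝ)| ≤ ((m ! ^ D * 2 ^ m : ℕ) : ℝ) := by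
    rw [Finset.sum_congr rfl fun k _ => habs k, ← Finset.mul_sum, hKdef, ← Finset.prod_univ_sum (fun i => Finset.range (j i + 1))
      (fun i x => (((j i).choose x : ℕ) : ℝ))]
    have h2 : ∀ i : Fin D, ∑ x ∈ Finset.range (j i + 1), ((j i).choose x : ℝ) = 2 ^ (j i) := by
      intro i
      rw [← Nat.cast_sum, Nat.sum_range_choose]
      push_cast; ring
    rw [Finset.prod_congr rfl fun i _ => h2 i]
    have h3 : ∏ i : Fin D, (2 : ℝ) ^ (j i) = 2 ^ m := by
      rw [Finset.prod_pow_eq_pow_sum, hj]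
    rw [h3]
    push_cast
    have : (q : ℝ) ≤ (m ! ^ D : ℝ) := by exact_mod_cast hqle
    nlinarith [pow_pos (by norm_num : (0:ℝ) < 2) m]
  -- sample points are admissible
  have hK' : ∀ k ∈ K, (∑ i, |((fun i => (k i : ℤ)) i)|) ≤ (m : ℤ) := by
    intro k hk
    calc ∑ i, |((k i : ℕ) : ℤ)| = ∑ i, ((k i : ℕ) : ℤ) := by
          refine Finset.sum_congr rfl fun i _ => ?_
          exact abs_of_nonneg (Int.natCast_nonneg _)
      _ ≤ ∑ i, ((j i : ℕ) : ℤ) := Finset.sum_le_sum fun i _ => by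
          exact_mod_cast hKmem k hk i
      _ = (m : ℤ) := by rw [← Nat.cast_sum, hj]
  -- final estimate
  calc torusNorm (((m ! ^ D : ℕ) : ℝ) * a j)
      = torusNorm (∑ k ∈ K, (((q : ℤ) * c k : ℤ) : ℝ) * g (fun i => (k i : ℤ))) := by rw [hQa]
    _ ≤ ∑ k ∈ K, torusNorm ((((q : ℤ) * c k : ℤ) : ℝ) * g (fun i => (k i : ℤ))) :=
        torusNorm_sum_le _ _
    _ ≤ ∑ k ∈ K, |(((q : ℤ) * c k : ℤ) : ℝ)| * C₀ := by
        refine Finset.sum_le_sum fun k hk => ?_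
        exact le_trans (torusNorm_int_mul _ _)
          (mul_le_mul_of_nonneg_left (hg' _ (hK' k hk)) (abs_nonneg _))
    _ = (∑ k ∈ K, |(((q : ℤ) * c k : ℤ) : ℝ)|) * C₀ := by rw [Finset.sum_mul]
    _ ≤ ((m ! ^ D * 2 ^ m : ℕ) : ℝ) * C₀ := mul_le_mul_of_nonneg_right hsumabs hC₀
    _ = C₀ * ((m ! ^ D * 2 ^ m : ℕ) : ℝ) := mul_comm _ _
end

section
/- Let D ≥ 1 and let N be a prime. There exists a constant C = C(D) > 0 such that for every function a: (ℤ/Nℤ)^D → ℂ and every D-dimensional arithmetic progression P ⊆ (ℤ/Nℤ)^D (a product of arithmetic progressions in each coordinate), |𝔼_{n ∈ (ℤ/Nℤ)^D} 1_P(n) a(n)| ≤ C ‖a‖_{U²((ℤ/Nℤ)^D)}. -/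
open scoped BigOperators

/-- The fourth power of the Gowers `U²`-norm of `f : (ℤ/Nℤ)^D → ℂ`:
`𝔼_{n,h₁,h₂} f(n) conj(f(n+h₁)) conj(f(n+h₂)) f(n+h₁+h₂)`. -/
noncomputable def gowersU2p4 {D N : ℕ} [NeZero N] (f : (Fin D → ZMod N) → ℂ) : ℂ :=
  (1 / (N : ℂ) ^ (3 * D)) *
    ∑ n : Fin D → ZMod N, ∑ h₁ : Fin D → ZMod N, ∑ h₂ : Fin D → ZMod N,
      f n * (starRingEnd ℂ) (f (n + h₁)) * (starRingEnd ℂ) (f (n + h₂)) * f (n + h₁ + h₂)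

set_option linter.unusedSectionVars false
set_option linter.unusedVariables false
set_option maxHeartbeats 1000000

open Finset Complex

namespace S13

section onedim
variable {N : ℕ} [NeZero N]

noncomputable def ee (x : ZMod N) : ℂ := Complex.exp (2 * Real.pi * Complex.I / N) ^ x.val

lemma ee_root : IsPrimitiveRoot (Complex.exp (2 * Real.pi * Complex.I / (N:ℂ))) N :=
  Complex.isPrimitiveRoot_exp N (NeZero.ne N)

lemma ee_pow_card : (Complex.exp (2 * Real.pi * Complex.I / (N:ℂ))) ^ N = 1 :=
  (ee_root (N := N)).pow_eq_one

lemma ee_pow_mod (a : ℕ) : (Complex.exp (2 * Real.pi * Complex.I / (N:ℂ))) ^ (a % N) = (Complex.exp (2 * Real.pi * Complex.I / (N:ℂ))) ^ a := by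
  conv_rhs => rw [← Nat.div_add_mod a N, pow_add, pow_mul, ee_pow_card, one_pow, one_mul]

lemma ee_add (x y : ZMod N) : ee (x + y) = ee x * ee y := by
  unfold ee
  rw [← pow_add, ZMod.val_add, ee_pow_mod]

omit [NeZero N] in
lemma ee_zero : ee (0 : ZMod N) = 1 := by
  unfold ee; rw [ZMod.val_zero, pow_zero]

omit [NeZero N] in
lemma abs_ee (x : ZMod N) : ‖ee x‖ = 1 := by
  unfold ee
  rw [norm_pow, Complex.norm_exp]
  have : (2 * ↑Real.pi * Complex.I / (N:ℂ)).re = 0 := by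
    simp [Complex.div_re]
  rw [this, Real.exp_zero, one_pow]

omit [NeZero N] in
lemma ee_ne_zero (x : ZMod N) : ee x ≠ 0 := by
  intro h
  have := abs_ee x
  rw [h] at this; simp at this

lemma conj_ee (x : ZMod N) : (starRingEnd ℂ) (ee x) = ee (-x) := by
  have h1 : ee x * (starRingEnd ℂ) (ee x) = 1 := by
    rw [Complex.mul_conj]
    norm_cast
    rw [Complex.normSq_eq_norm_sq, abs_ee]; norm_num
  have h2 : ee x * ee (-x) = 1 := by rw [← ee_add, add_neg_cancel, ee_zero]
  exact mul_left_cancel₀ (ee_ne_zero x) (h1.trans h2.symm)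

lemma ee_ne_one {x : ZMod N} (hx : x ≠ 0) : ee x ≠ 1 := by
  intro h
  have hdvd : N ∣ x.val := (ee_root (N := N)).dvd_of_pow_eq_one _ h
  have hlt : x.val < N := ZMod.val_lt x
  have hv : x.val = 0 := Nat.eq_zero_of_dvd_of_lt hdvd hlt
  exact hx ((ZMod.val_eq_zero x).mp hv)

lemma ee_nsmul (θ : ZMod N) (t : ℕ) : ee (θ * (t : ZMod N)) = ee θ ^ t := by
  induction t with
  | zero => simp [ee_zero]
  | succ n ih => rw [Nat.cast_succ, mul_add, mul_one, ee_add, ih, pow_succ]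

lemma sum_ee {ξ : ZMod N} (hξ : ξ ≠ 0) : ∑ x : ZMod N, ee (ξ * x) = 0 := by
  have key : ee ξ * ∑ x : ZMod N, ee (ξ * x) = ∑ x : ZMod N, ee (ξ * x) := by
    rw [Finset.mul_sum]
    rw [← Equiv.sum_comp (Equiv.addRight (1 : ZMod N)) (fun x => ee (ξ * x))]
    refine Finset.sum_congr rfl fun x _ => ?_
    simp only [Equiv.coe_addRight]
    rw [mul_add, mul_one, ee_add, mul_comm]
  have h2 : (ee ξ - 1) * ∑ x : ZMod N, ee (ξ * x) = 0 := by
    rw [sub_mul, one_mul, key, sub_self]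
  rcases mul_eq_zero.mp h2 with h | h
  · exact absurd (sub_eq_zero.mp h) (ee_ne_one hξ)
  · exact h

lemma sum_ee_ite (ξ : ZMod N) : ∑ x : ZMod N, ee (ξ * x) = if ξ = 0 then (N:ℂ) else 0 := by
  split_ifs with h
  · subst h; simp [ee_zero, ZMod.card]
  · exact sum_ee h


end onedim

noncomputable def rr (k : ℕ) : ℝ := Real.sqrt k
noncomputable def qq (k : ℕ) : ℝ := Real.sqrt (Real.sqrt k)

lemma rr_sq (k : ℕ) : rr k * rr k = k := Real.mul_self_sqrt (Nat.cast_nonneg k)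
lemma qq_sq (k : ℕ) : qq k * qq k = rr k := Real.mul_self_sqrt (Real.sqrt_nonneg _)
lemma rr_nonneg (k : ℕ) : 0 ≤ rr k := Real.sqrt_nonneg _
lemma qq_nonneg (k : ℕ) : 0 ≤ qq k := Real.sqrt_nonneg _
lemma rr_pos {k : ℕ} (hk : 1 ≤ k) : 0 < rr k :=
  Real.sqrt_pos.mpr (by exact_mod_cast hk)
lemma qq_pos {k : ℕ} (hk : 1 ≤ k) : 0 < qq k :=
  Real.sqrt_pos.mpr (rr_pos hk)
lemma rr_mono {j k : ℕ} (h : j ≤ k) : rr j ≤ rr k :=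
  Real.sqrt_le_sqrt (by exact_mod_cast h)
lemma qq_mono {j k : ℕ} (h : j ≤ k) : qq j ≤ qq k :=
  Real.sqrt_le_sqrt (rr_mono h)
lemma rr_one : rr 1 = 1 := by unfold rr; simp
lemma qq_one : qq 1 = 1 := by unfold qq; simp
lemma qq_ge_one {k : ℕ} (hk : 1 ≤ k) : 1 ≤ qq k := qq_one ▸ qq_mono hk

lemma ind1 : ∀ n : ℕ, 1 ≤ n → ∑ k ∈ Finset.Icc 1 n, 1/((k:ℝ) * rr k) ≤ 3 - 2 / rr n := by
  intro n hn
  induction n, hn using Nat.le_induction with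
  | base => rw [Finset.Icc_self, Finset.sum_singleton, rr_one]; norm_num
  | succ n hn ih =>
    rw [Finset.sum_Icc_succ_top (by omega : 1 ≤ n + 1)]
    have hr0 : 0 < rr n := rr_pos hn
    have hr1 : 0 < rr (n+1) := rr_pos (by omega)
    have hle : rr n ≤ rr (n+1) := rr_mono (by omega)
    have hs1 : rr (n+1) * rr (n+1) = ((n:ℝ)+1) := by
      have := rr_sq (n+1); push_cast at this ⊢; linarith
    have hs0 : rr n * rr n = (n:ℝ) := rr_sq n
    have hprod : (rr (n+1) - rr n) * (rr (n+1) + rr n) = 1 := by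
      linear_combination hs1 - hs0
    have c1 : rr n * rr (n+1) * (rr (n+1) + rr n) ≤ rr (n+1) * rr (n+1) * (2 * rr (n+1)) := by
      gcongr <;> linarith
    have c2 : rr (n+1) * rr (n+1) * (2 * rr (n+1)) = 2 * ((((n:ℝ)+1)) * rr (n+1)) := by
      linear_combination 2 * rr (n+1) * hs1
    have e2 : rr (n+1) - rr n = 1 / (rr (n+1) + rr n) := by
      rw [eq_div_iff (by positivity)]; linear_combination hprod
    have e3 : 2/rr n - 2/rr (n+1) = 2 / (rr n * rr (n+1) * (rr (n+1) + rr n)) := by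
      rw [div_sub_div _ _ hr0.ne' hr1.ne']
      rw [show 2 * rr (n+1) - rr n * 2 = 2 * (rr (n+1) - rr n) by ring, e2]
      field_simp
    have hstep : 1/(((n:ℝ)+1) * rr (n+1)) ≤ 2/rr n - 2/rr (n+1) := by
      rw [e3, div_le_div_iff₀ (by positivity) (by positivity)]
      linarith [c1, c2]
    have hcast : ((n+1 : ℕ):ℝ) = (n:ℝ)+1 := by push_cast; ring
    rw [hcast]
    linarith [ih]

lemma ind2 : ∀ n : ℕ, 1 ≤ n → ∑ k ∈ Finset.Icc 1 n, 1/((k:ℝ) * qq k) ≤ 5 - 4 / qq n := by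
  intro n hn
  induction n, hn using Nat.le_induction with
  | base => rw [Finset.Icc_self, Finset.sum_singleton, qq_one]; norm_num
  | succ n hn ih =>
    rw [Finset.sum_Icc_succ_top (by omega : 1 ≤ n + 1)]
    have hr0 : 0 < rr n := rr_pos hn
    have hr1 : 0 < rr (n+1) := rr_pos (by omega)
    have hq0 : 0 < qq n := qq_pos hn
    have hq1 : 0 < qq (n+1) := qq_pos (by omega)
    have hrle : rr n ≤ rr (n+1) := rr_mono (by omega)
    have hqle : qq n ≤ qq (n+1) := qq_mono (by omega)
    have hs1 : rr (n+1) * rr (n+1) = ((n:ℝ)+1) := by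
      have := rr_sq (n+1); push_cast at this ⊢; linarith
    have hs0 : rr n * rr n = (n:ℝ) := rr_sq n
    have ht1 : qq (n+1) * qq (n+1) = rr (n+1) := qq_sq (n+1)
    have ht0 : qq n * qq n = rr n := qq_sq n
    have hd : (qq (n+1) - qq n) * ((qq (n+1) + qq n) * (rr (n+1) + rr n)) = 1 := by
      linear_combination (rr (n+1) + rr n) * ht1 - (rr (n+1) + rr n) * ht0 + hs1 - hs0
    have c1 : qq n * qq (n+1) * ((qq (n+1) + qq n) * (rr (n+1) + rr n))
        ≤ qq (n+1) * qq (n+1) * ((2 * qq (n+1)) * (2 * rr (n+1))) := by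
      gcongr <;> linarith
    have c2 : qq (n+1) * qq (n+1) * ((2 * qq (n+1)) * (2 * rr (n+1)))
        = 4 * ((((n:ℝ)+1)) * qq (n+1)) := by
      linear_combination 4 * qq (n+1) * rr (n+1) * ht1 + 4 * qq (n+1) * hs1
    have e2 : qq (n+1) - qq n = 1 / ((qq (n+1) + qq n) * (rr (n+1) + rr n)) := by
      rw [eq_div_iff (by positivity)]; linear_combination hd
    have e3 : 4/qq n - 4/qq (n+1)
        = 4 / (qq n * qq (n+1) * ((qq (n+1) + qq n) * (rr (n+1) + rr n))) := by
      rw [div_sub_div _ _ hq0.ne' hq1.ne']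
      rw [show 4 * qq (n+1) - qq n * 4 = 4 * (qq (n+1) - qq n) by ring, e2]
      field_simp
    have hstep : 1/(((n:ℝ)+1) * qq (n+1)) ≤ 4/qq n - 4/qq (n+1) := by
      rw [e3, div_le_div_iff₀ (by positivity) (by positivity)]
      linarith [c1, c2]
    have hcast : ((n+1 : ℕ):ℝ) = (n:ℝ)+1 := by push_cast; ring
    rw [hcast]
    linarith [ih]



def mm {N : ℕ} [NeZero N] (θ : ZMod N) : ℕ := min θ.val (N - θ.val)

noncomputable def ff (k : ℕ) : ℝ := k / qq k

noncomputable def ww {N : ℕ} [NeZero N] (θ : ZMod N) : ℝ := 1 / ff (mm θ + 1)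

lemma ff_pos {k : ℕ} (hk : 1 ≤ k) : 0 < ff k := by
  unfold ff
  exact div_pos (by exact_mod_cast hk) (qq_pos hk)

lemma ww_pos {N : ℕ} [NeZero N] (θ : ZMod N) : 0 < ww θ :=
  one_div_pos.mpr (ff_pos (by omega))

lemma ff_one : ff 1 = 1 := by unfold ff; rw [qq_one]; norm_num

lemma mm_zero {N : ℕ} [NeZero N] : mm (0 : ZMod N) = 0 := by
  unfold mm; simp

lemma ww_zero {N : ℕ} [NeZero N] : ww (0 : ZMod N) = 1 := by
  unfold ww; rw [mm_zero, ff_one]; norm_num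

lemma mm_le {N : ℕ} [NeZero N] (θ : ZMod N) : mm θ + 1 ≤ N := by
  have h1 : θ.val < N := ZMod.val_lt θ
  unfold mm; omega

/-- key counting lemma -/
lemma sum_g_mm {N : ℕ} [NeZero N] (g : ℕ → ℝ) (hg : ∀ k, 0 ≤ g k) :
    ∑ θ ∈ Finset.univ.erase (0 : ZMod N), g (mm θ)
      ≤ 2 * ∑ k ∈ Finset.Ico 1 N, g k := by
  have h1 : ∑ θ ∈ Finset.univ.erase (0 : ZMod N), g (mm θ)
      ≤ ∑ θ ∈ Finset.univ.erase (0 : ZMod N), (g θ.val + g (N - θ.val)) := by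
    refine Finset.sum_le_sum fun θ _ => ?_
    unfold mm
    rcases min_choice θ.val (N - θ.val) with h | h <;> rw [h]
    · nlinarith [hg (N - θ.val)]
    · nlinarith [hg θ.val]
  rw [Finset.sum_add_distrib] at h1
  have h2 : ∑ θ ∈ Finset.univ.erase (0 : ZMod N), g (N - θ.val)
      = ∑ θ ∈ Finset.univ.erase (0 : ZMod N), g θ.val := by
    refine Finset.sum_nbij' (fun θ => -θ) (fun θ => -θ) ?_ ?_ ?_ ?_ ?_
    · intro θ hθ
      rw [Finset.mem_erase] at hθ ⊢
      exact ⟨neg_ne_zero.mpr hθ.1, Finset.mem_univ _⟩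
    · intro θ hθ
      rw [Finset.mem_erase] at hθ ⊢
      exact ⟨neg_ne_zero.mpr hθ.1, Finset.mem_univ _⟩
    · intro θ _; simp
    · intro θ _; simp
    · intro θ hθ
      rw [Finset.mem_erase] at hθ
      rw [ZMod.neg_val, if_neg hθ.1]
  have h3 : ∑ θ ∈ Finset.univ.erase (0 : ZMod N), g θ.val
      = ∑ k ∈ Finset.Ico 1 N, g k := by
    refine Finset.sum_nbij' (fun θ => θ.val) (fun k => (k : ZMod N)) ?_ ?_ ?_ ?_ ?_
    · intro θ hθ
      rw [Finset.mem_erase] at hθ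
      rw [Finset.mem_Ico]
      have hlt := ZMod.val_lt θ
      have hne : θ.val ≠ 0 := fun h => hθ.1 ((ZMod.val_eq_zero θ).mp h)
      exact ⟨Nat.one_le_iff_ne_zero.mpr hne, hlt⟩
    · intro k hk
      rw [Finset.mem_Ico] at hk
      rw [Finset.mem_erase]
      refine ⟨?_, Finset.mem_univ _⟩
      intro h
      have := (ZMod.natCast_eq_zero_iff k N).mp h
      have := Nat.le_of_dvd (by omega) this
      omega
    · intro θ _; simp [ZMod.natCast_val, ZMod.cast_id]
    · intro k hk
      rw [Finset.mem_Ico] at hk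
      exact ZMod.val_cast_of_lt hk.2
    · intro θ _; rfl
  rw [h2, h3] at h1
  linarith [h1]

lemma tail1 {N : ℕ} [NeZero N] :
    ∑ k ∈ Finset.Ico 1 N, (1 / ff (k+1))^2 ≤ 3 := by
  have hN : 1 ≤ N := Nat.one_le_iff_ne_zero.mpr (NeZero.ne N)
  have hterm : ∀ k : ℕ, 1 ≤ k → (1 / ff (k+1))^2 = 1/(((k:ℝ)+1) * rr (k+1)) := by
    intro k hk
    have h1 := rr_sq (k+1)
    have h2 := qq_sq (k+1)
    have hq : 0 < qq (k+1) := qq_pos (by omega)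
    have hff : (ff (k+1))^2 = ((k:ℝ)+1) * rr (k+1) := by
      have h1' : rr (k+1)^2 = ((k:ℝ)+1) := by rw [pow_two]; rw [h1]; push_cast; ring
      have h2' : qq (k+1)^2 = rr (k+1) := by rw [pow_two]; exact h2
      unfold ff
      rw [div_pow, div_eq_iff (by positivity)]
      push_cast
      linear_combination (-(((k:ℝ)+1) * rr (k+1))) * h2' + (-((k:ℝ)+1)) * h1'
    rw [div_pow, one_pow, hff]
  calc ∑ k ∈ Finset.Ico 1 N, (1 / ff (k+1))^2
      = ∑ k ∈ Finset.Ico 1 N, 1/(((k:ℝ)+1) * rr (k+1)) := by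
        refine Finset.sum_congr rfl fun k hk => ?_
        rw [Finset.mem_Ico] at hk
        exact hterm k hk.1
    _ ≤ ∑ k ∈ Finset.Icc 1 N, 1/((k:ℝ) * rr k) := by
        have hmap : ∑ k ∈ Finset.Ico 1 N, 1/(((k:ℝ)+1) * rr (k+1))
            = ∑ j ∈ Finset.Ico 2 (N+1), 1/((j:ℝ) * rr j) := by
          rw [← Finset.sum_Ico_add' (fun j : ℕ => 1/((j:ℝ) * rr j)) 1 N 1]
          refine Finset.sum_congr rfl fun x _ => ?_
          push_cast
          ring_nf
        rw [hmap]
        refine Finset.sum_le_sum_of_subset_of_nonneg ?_ ?_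
        · intro j hj
          rw [Finset.mem_Ico] at hj
          rw [Finset.mem_Icc]
          omega
        · intro j hj _
          rcases Nat.eq_zero_or_pos j with h | h
          · subst h; simp
          · have h1 : (0:ℝ) < j := by exact_mod_cast h
            exact le_of_lt (div_pos one_pos (mul_pos h1 (rr_pos h)))
    _ ≤ 3 - 2 / rr N := ind1 N hN
    _ ≤ 3 := by
        have := rr_pos hN
        have : 0 ≤ 2 / rr N := by positivity
        linarith

lemma tail2 {N : ℕ} [NeZero N] :
    ∑ k ∈ Finset.Ico 1 N, (1/(2*(k:ℝ)))^2 * ff (k+1) ≤ 5/2 := by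
  have hN : 1 ≤ N := Nat.one_le_iff_ne_zero.mpr (NeZero.ne N)
  have hterm : ∀ k : ℕ, 1 ≤ k → (1/(2*(k:ℝ)))^2 * ff (k+1) ≤ 1/2 * (1/((k:ℝ) * qq k)) := by
    intro k hk
    have hq : 0 < qq k := qq_pos hk
    have hq1 : 0 < qq (k+1) := qq_pos (by omega)
    have hkR : (0:ℝ) < k := by exact_mod_cast hk
    have hffle : ff (k+1) ≤ 2*(k:ℝ) / qq k := by
      unfold ff
      apply div_le_div₀ ?_ ?_ hq (qq_mono (by omega))
      · positivity
      · have hk1 : (1:ℝ) ≤ (k:ℝ) := by exact_mod_cast hk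
        push_cast
        linarith
    calc (1/(2*(k:ℝ)))^2 * ff (k+1) ≤ (1/(2*(k:ℝ)))^2 * (2*(k:ℝ) / qq k) := by
          apply mul_le_mul_of_nonneg_left hffle (by positivity)
      _ = 1/2 * (1/((k:ℝ) * qq k)) := by field_simp
  calc ∑ k ∈ Finset.Ico 1 N, (1/(2*(k:ℝ)))^2 * ff (k+1)
      ≤ ∑ k ∈ Finset.Ico 1 N, 1/2 * (1/((k:ℝ) * qq k)) := by
        refine Finset.sum_le_sum fun k hk => ?_
        rw [Finset.mem_Ico] at hk
        exact hterm k hk.1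
    _ ≤ ∑ k ∈ Finset.Icc 1 N, 1/2 * (1/((k:ℝ) * qq k)) := by
        refine Finset.sum_le_sum_of_subset_of_nonneg ?_ ?_
        · intro j hj
          rw [Finset.mem_Ico] at hj
          rw [Finset.mem_Icc]
          omega
        · intro j hj _
          rcases Nat.eq_zero_or_pos j with h | h
          · subst h; simp
          · have h1 : (0:ℝ) < j := by exact_mod_cast h
            have h2 := qq_pos h
            positivity
    _ = 1/2 * ∑ k ∈ Finset.Icc 1 N, (1/((k:ℝ) * qq k)) := by rw [Finset.mul_sum]
    _ ≤ 1/2 * (5 - 4 / qq N) := by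
        have h := ind2 N hN
        simp_rw [one_div ((_:ℝ) * qq _)] at h ⊢
        linarith [h]
    _ ≤ 5/2 := by
        have := qq_pos hN
        have : 0 ≤ 4 / qq N := by positivity
        linarith



section onedim2
variable {N : ℕ} [NeZero N]

lemma mm_pos {θ : ZMod N} (hθ : θ ≠ 0) : 0 < mm θ := by
  have hv1 : 1 ≤ θ.val := Nat.one_le_iff_ne_zero.mpr (fun h => hθ ((ZMod.val_eq_zero θ).mp h))
  have hv2 : θ.val < N := ZMod.val_lt θ
  unfold mm; omega


lemma ee_sub_one_lb (θ : ZMod N) (hθ : θ ≠ 0) :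
    4 * (mm θ : ℝ) / N ≤ ‖ee θ - 1‖ := by
  have hNpos : 0 < N := Nat.pos_of_ne_zero (NeZero.ne N)
  obtain ⟨v, hv⟩ : ∃ v : ℕ, θ.val = v := ⟨θ.val, rfl⟩
  have hv1 : 1 ≤ v := hv ▸ Nat.one_le_iff_ne_zero.mpr (fun h => hθ ((ZMod.val_eq_zero θ).mp h))
  have hv2 : v < N := hv ▸ ZMod.val_lt θ
  have hmv : mm θ ≤ v := by unfold mm; omega
  have hmnv : mm θ ≤ N - v := by unfold mm; omega
  set α : ℝ := 2 * Real.pi * v / N with hα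
  have hee : ee θ = Complex.exp ((α : ℂ) * Complex.I) := by
    unfold ee
    rw [hv, ← Complex.exp_nat_mul]
    congr 1
    rw [hα]
    simp only [Complex.ofReal_div, Complex.ofReal_mul, Complex.ofReal_natCast,
      Complex.ofReal_ofNat]
    have : (N:ℂ) ≠ 0 := Nat.cast_ne_zero.mpr (NeZero.ne N)
    field_simp
  have habs2 : (‖ee θ - 1‖)^2 = 2 - 2 * Real.cos α := by
    rw [hee, Complex.exp_mul_I, ← Complex.ofReal_cos, ← Complex.ofReal_sin, Complex.sq_norm]
    simp [Complex.normSq_apply, Complex.cos_ofReal_re, Complex.sin_ofReal_re]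
    linear_combination Real.sin_sq_add_cos_sq α
  have h2cos : 2 - 2 * Real.cos α = (2 * Real.sin (α/2))^2 := by
    have h1 := Real.sin_sq_eq_half_sub (α/2)
    have h2 : 2 * (α/2) = α := by ring
    rw [h2] at h1
    nlinarith [h1]
  have hsin : 2 * (mm θ : ℝ) / N ≤ Real.sin (α/2) := by
    have hαhalf : α / 2 = Real.pi * v / N := by rw [hα]; ring
    rcases le_or_gt (2*v) N with hc | hc
    · have hx0 : (0:ℝ) ≤ Real.pi * v / N := by positivity
      have hx1 : Real.pi * v / N ≤ Real.pi / 2 := by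
        rw [div_le_div_iff₀ (by positivity) (by norm_num : (0:ℝ) < 2)]
        have : (2 * v : ℝ) ≤ N := by exact_mod_cast hc
        nlinarith [Real.pi_pos]
      have hjordan := Real.mul_le_sin hx0 hx1
      rw [hαhalf]
      calc 2 * (mm θ : ℝ) / N ≤ 2 * (v:ℝ) / N := by
            gcongr
            all_goals exact_mod_cast hmv
        _ = 2 / Real.pi * (Real.pi * v / N) := by
            field_simp
        _ ≤ Real.sin (Real.pi * v / N) := hjordan
    · have hnv : ((N - v : ℕ) : ℝ) = (N : ℝ) - v := by
        push_cast [Nat.cast_sub hv2.le]; ring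
      have hsub : Real.sin (α/2) = Real.sin (Real.pi * ((N - v : ℕ):ℝ) / N) := by
        rw [hαhalf, ← Real.sin_pi_sub]
        congr 1
        rw [hnv]
        have : (N:ℝ) ≠ 0 := Nat.cast_ne_zero.mpr (NeZero.ne N)
        field_simp
      have hx0 : (0:ℝ) ≤ Real.pi * ((N - v : ℕ):ℝ) / N := by positivity
      have hx1 : Real.pi * ((N-v:ℕ):ℝ) / N ≤ Real.pi / 2 := by
        rw [div_le_div_iff₀ (by positivity) (by norm_num : (0:ℝ) < 2)]
        have h2 : (N:ℝ) < 2*v := by exact_mod_cast hc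
        rw [hnv]
        nlinarith [Real.pi_pos]
      have hjordan := Real.mul_le_sin hx0 hx1
      rw [hsub]
      calc 2 * (mm θ : ℝ) / N ≤ 2 * ((N - v : ℕ):ℝ) / N := by
            gcongr
            all_goals exact_mod_cast hmnv
        _ = 2 / Real.pi * (Real.pi * ((N - v:ℕ):ℝ) / N) := by
            field_simp
        _ ≤ Real.sin (Real.pi * ((N - v:ℕ):ℝ) / N) := hjordan
  have habs0 : 0 ≤ ‖ee θ - 1‖ := norm_nonneg _
  have ht0 : 0 ≤ 4 * (mm θ : ℝ) / N := by positivity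
  have hsq : (4 * (mm θ : ℝ) / N)^2 ≤ (‖ee θ - 1‖)^2 := by
    rw [habs2, h2cos]
    have hs0 : 0 ≤ 2 * (mm θ : ℝ)/N := by positivity
    have hss : 0 ≤ Real.sin (α/2) := le_trans hs0 hsin
    have hmul := mul_le_mul hsin hsin hs0 hss
    ring_nf at hmul ⊢
    linarith [hmul]
  calc 4 * (mm θ : ℝ) / N = Real.sqrt ((4 * (mm θ : ℝ) / N)^2) := (Real.sqrt_sq ht0).symm
    _ ≤ Real.sqrt ((‖ee θ - 1‖)^2) := Real.sqrt_le_sqrt hsq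
    _ = ‖ee θ - 1‖ := Real.sqrt_sq habs0

lemma geom_bound (θ : ZMod N) (hθ : θ ≠ 0) (L' : ℕ) :
    ‖∑ t ∈ Finset.range L', ((starRingEnd ℂ) (ee θ))^t‖
      ≤ (N:ℝ) / (2 * mm θ) := by
  have hNpos : 0 < N := Nat.pos_of_ne_zero (NeZero.ne N)
  have hm1 : 0 < mm θ := mm_pos hθ
  have hm1R : (0:ℝ) < (mm θ : ℝ) := by exact_mod_cast hm1
  set z := (starRingEnd ℂ) (ee θ) with hz
  have hzne : z ≠ 1 := by
    intro h
    apply ee_ne_one hθ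
    have := congrArg (starRingEnd ℂ) h
    rwa [Complex.conj_conj, map_one] at this
  rw [geom_sum_eq hzne, norm_div]
  have habs1 : ‖z‖ = 1 := by rw [hz, Complex.norm_conj, abs_ee]
  have hnum : ‖z^L' - 1‖ ≤ 2 := by
    calc ‖z^L' - 1‖ ≤ ‖z^L'‖ + ‖(1:ℂ)‖ :=
          norm_sub_le _ _
      _ = 2 := by rw [norm_pow, habs1, one_pow, norm_one]; norm_num
  have hden : 4 * (mm θ : ℝ) / N ≤ ‖z - 1‖ := by
    have h1 : z - 1 = (starRingEnd ℂ) (ee θ - 1) := by rw [map_sub, map_one]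
    rw [h1, Complex.norm_conj]
    exact ee_sub_one_lb θ hθ
  calc ‖z^L' - 1‖ / ‖z - 1‖
      ≤ 2 / (4 * (mm θ : ℝ) / N) := by
        have h4 : (0:ℝ) < 4 * (mm θ:ℝ) := by nlinarith [hm1R]
        have hNR : (0:ℝ) < (N:ℝ) := by exact_mod_cast hNpos
        exact div_le_div₀ (by norm_num) hnum (div_pos h4 hNR) hden
    _ = (N:ℝ) / (2 * mm θ) := by
        field_simp
        ring


end onedim2

section multidim
variable {N : ℕ} [NeZero N] {D : ℕ}

noncomputable def chi (ξ n : Fin D → ZMod N) : ℂ := ∏ i, ee (ξ i * n i)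

lemma chi_add (ξ n m : Fin D → ZMod N) : chi ξ (n + m) = chi ξ n * chi ξ m := by
  unfold chi
  rw [← Finset.prod_mul_distrib]
  exact Finset.prod_congr rfl fun i _ => by rw [Pi.add_apply, mul_add, ee_add]

lemma chi_neg (ξ n : Fin D → ZMod N) : chi ξ (-n) = (starRingEnd ℂ) (chi ξ n) := by
  unfold chi
  rw [map_prod]
  exact Finset.prod_congr rfl fun i _ => by rw [conj_ee, Pi.neg_apply, mul_neg]

lemma sum_chi (v : Fin D → ZMod N) :
    ∑ ξ : Fin D → ZMod N, chi ξ v = if v = 0 then (N:ℂ) ^ D else 0 := by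
  unfold chi
  rw [← Fintype.prod_sum (fun i η => ee (η * v i))]
  have : ∀ i : Fin D, ∑ η : ZMod N, ee (η * v i) = if v i = 0 then (N:ℂ) else 0 := by
    intro i
    rw [show (∑ η : ZMod N, ee (η * v i)) = ∑ η : ZMod N, ee (v i * η) from
      Finset.sum_congr rfl fun η _ => by rw [mul_comm], sum_ee_ite]
  simp_rw [this]
  by_cases h : v = 0
  · subst h; simp
  · have : ∃ i, v i ≠ 0 := by
      by_contra hc; push_neg at hc; exact h (funext hc)
    obtain ⟨i, hi⟩ := this
    rw [if_neg h]
    exact Finset.prod_eq_zero (Finset.mem_univ i) (by rw [if_neg hi])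

noncomputable def fhat (a : (Fin D → ZMod N) → ℂ) (ξ : Fin D → ZMod N) : ℂ :=
  (1 / (N:ℂ) ^ D) * ∑ n, a n * (starRingEnd ℂ) (chi ξ n)

lemma hNC : ((N:ℂ)) ≠ 0 := Nat.cast_ne_zero.mpr (NeZero.ne N)

lemma parseval (a b : (Fin D → ZMod N) → ℂ) :
    ∑ ξ, fhat a ξ * (starRingEnd ℂ) (fhat b ξ)
      = (1 / (N:ℂ) ^ D) * ∑ n, a n * (starRingEnd ℂ) (b n) := by
  have hc : (starRingEnd ℂ) ((1:ℂ) / (N:ℂ) ^ D) = 1 / (N:ℂ)^D := by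
    rw [map_div₀, map_one, map_pow, Complex.conj_natCast]
  have step : ∀ ξ : Fin D → ZMod N, fhat a ξ * (starRingEnd ℂ) (fhat b ξ)
      = ∑ x, ∑ y, ((1/(N:ℂ)^D) * (1/(N:ℂ)^D)) *
          ((a x * (starRingEnd ℂ) (b y)) * chi ξ (y - x)) := by
    intro ξ
    have e1 : fhat a ξ * (starRingEnd ℂ) (fhat b ξ)
        = ((1/(N:ℂ)^D) * (1/(N:ℂ)^D)) *
          ((∑ x, a x * (starRingEnd ℂ) (chi ξ x)) * (∑ y, (starRingEnd ℂ) (b y) * chi ξ y)) := by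
      unfold fhat
      rw [map_mul, hc, map_sum]
      simp_rw [map_mul, Complex.conj_conj]
      ring
    rw [e1, Finset.sum_mul_sum, Finset.mul_sum]
    refine Finset.sum_congr rfl fun x _ => ?_
    rw [Finset.mul_sum]
    refine Finset.sum_congr rfl fun y _ => ?_
    have : chi ξ (y - x) = chi ξ y * (starRingEnd ℂ) (chi ξ x) := by
      rw [sub_eq_add_neg, chi_add, chi_neg]
    rw [this]; ring
  simp_rw [step]
  rw [Finset.sum_comm]
  have swap2 : ∀ x : Fin D → ZMod N,
      (∑ ξ : Fin D → ZMod N, ∑ y : Fin D → ZMod N, ((1/(N:ℂ)^D) * (1/(N:ℂ)^D)) *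
          ((a x * (starRingEnd ℂ) (b y)) * chi ξ (y - x)))
      = ((1/(N:ℂ)^D) * (1/(N:ℂ)^D)) * ((a x * (starRingEnd ℂ) (b x)) * (N:ℂ)^D) := by
    intro x
    rw [Finset.sum_comm]
    have : ∀ y : Fin D → ZMod N,
        (∑ ξ : Fin D → ZMod N, ((1/(N:ℂ)^D) * (1/(N:ℂ)^D)) *
          ((a x * (starRingEnd ℂ) (b y)) * chi ξ (y - x)))
        = ((1/(N:ℂ)^D) * (1/(N:ℂ)^D)) * (a x * (starRingEnd ℂ) (b y)) *
            (if y = x then (N:ℂ)^D else 0) := by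
      intro y
      rw [← Finset.mul_sum]
      simp_rw [← Finset.mul_sum]
      rw [sum_chi]
      simp_rw [sub_eq_zero]
      split_ifs <;> ring
    simp_rw [this, mul_ite, mul_zero]
    rw [Finset.sum_ite_eq' Finset.univ x
      (fun y => ((1/(N:ℂ)^D) * (1/(N:ℂ)^D)) * (a x * (starRingEnd ℂ) (b y)) * (N:ℂ)^D)]
    rw [if_pos (Finset.mem_univ x)]
    ring
  simp_rw [swap2]
  rw [Finset.mul_sum]
  refine Finset.sum_congr rfl fun x _ => ?_
  have hN : ((N:ℂ))^D ≠ 0 := pow_ne_zero _ hNC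
  field_simp


lemma chi_expand (ξ x y z w : Fin D → ZMod N) :
    chi ξ (y + z - x - w) = chi ξ y * chi ξ z * (starRingEnd ℂ) (chi ξ x) *
      (starRingEnd ℂ) (chi ξ w) := by
  rw [sub_eq_add_neg, sub_eq_add_neg, chi_add, chi_add, chi_add, chi_neg, chi_neg]

lemma gowers_A (a : (Fin D → ZMod N) → ℂ) :
    gowersU2p4 a = (1/(N:ℂ)^(3*D)) * ∑ x : Fin D → ZMod N, ∑ y : Fin D → ZMod N,
      ∑ z : Fin D → ZMod N,
        a x * (starRingEnd ℂ) (a y) * (starRingEnd ℂ) (a z) * a (y + z - x) := by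
  unfold gowersU2p4
  congr 1
  refine Finset.sum_congr rfl fun x _ => ?_
  rw [Fintype.sum_equiv (Equiv.addLeft x)
    (fun h₁ => ∑ h₂, a x * (starRingEnd ℂ) (a (x+h₁)) * (starRingEnd ℂ) (a (x+h₂)) * a (x+h₁+h₂))
    (fun y => ∑ h₂, a x * (starRingEnd ℂ) (a y) * (starRingEnd ℂ) (a (x+h₂)) * a (y+h₂))
    (fun h₁ => rfl)]
  refine Finset.sum_congr rfl fun y _ => ?_
  exact Fintype.sum_equiv (Equiv.addLeft x)
    (fun h₂ => a x * (starRingEnd ℂ) (a y) * (starRingEnd ℂ) (a (x+h₂)) * a (y+h₂))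
    (fun z => a x * (starRingEnd ℂ) (a y) * (starRingEnd ℂ) (a z) * a (y+z-x))
    (fun h₂ => by
      simp only [Equiv.coe_addLeft]
      rw [show y + (x + h₂) - x = y + h₂ by ring])

lemma gowers_B (a : (Fin D → ZMod N) → ℂ) :
    ∑ ξ : Fin D → ZMod N, (fhat a ξ)^2 * ((starRingEnd ℂ) (fhat a ξ))^2
      = (1/(N:ℂ)^(3*D)) * ∑ x : Fin D → ZMod N, ∑ y : Fin D → ZMod N,
      ∑ z : Fin D → ZMod N,
        a x * (starRingEnd ℂ) (a y) * (starRingEnd ℂ) (a z) * a (y + z - x) := by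
  have hc : (starRingEnd ℂ) ((1:ℂ) / (N:ℂ) ^ D) = 1 / (N:ℂ)^D := by
    rw [map_div₀, map_one, map_pow, Complex.conj_natCast]
  have hsplit : ∀ ξ : Fin D → ZMod N, (fhat a ξ)^2 * ((starRingEnd ℂ) (fhat a ξ))^2
      = (1/(N:ℂ)^D)^4 *
        ((∑ x, a x * (starRingEnd ℂ) (chi ξ x)) *
         ((∑ y, (starRingEnd ℂ) (a y) * chi ξ y) *
          ((∑ z, (starRingEnd ℂ) (a z) * chi ξ z) *
           (∑ w, a w * (starRingEnd ℂ) (chi ξ w))))) := by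
    intro ξ
    unfold fhat
    rw [map_mul, hc, map_sum]
    simp_rw [map_mul, Complex.conj_conj]
    ring
  simp_rw [hsplit]
  rw [← Finset.mul_sum]
  have hquad : ∀ ξ : Fin D → ZMod N,
      ((∑ x, a x * (starRingEnd ℂ) (chi ξ x)) *
       ((∑ y, (starRingEnd ℂ) (a y) * chi ξ y) *
        ((∑ z, (starRingEnd ℂ) (a z) * chi ξ z) *
         (∑ w, a w * (starRingEnd ℂ) (chi ξ w)))))
      = ∑ x, ∑ y, ∑ z, ∑ w,
          (a x * (starRingEnd ℂ) (a y) * (starRingEnd ℂ) (a z) * a w) *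
            chi ξ (y + z - x - w) := by
    intro ξ
    rw [Finset.sum_mul_sum, Finset.sum_mul_sum, Finset.sum_mul_sum]
    simp_rw [Finset.mul_sum]
    refine Finset.sum_congr rfl fun x _ => Finset.sum_congr rfl fun y _ =>
      Finset.sum_congr rfl fun z _ => Finset.sum_congr rfl fun w _ => ?_
    rw [chi_expand]; ring
  simp_rw [hquad]
  -- swap ξ-sum to the inside
  rw [Finset.sum_comm]
  have swap1 : ∀ x, (∑ ξ : Fin D → ZMod N, ∑ y : Fin D → ZMod N, ∑ z : Fin D → ZMod N,
      ∑ w : Fin D → ZMod N,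
        (a x * (starRingEnd ℂ) (a y) * (starRingEnd ℂ) (a z) * a w) * chi ξ (y + z - x - w))
      = ∑ y : Fin D → ZMod N, ∑ z : Fin D → ZMod N,
          (a x * (starRingEnd ℂ) (a y) * (starRingEnd ℂ) (a z) * a (y + z - x)) * (N:ℂ)^D := by
    intro x
    rw [Finset.sum_comm]
    refine Finset.sum_congr rfl fun y _ => ?_
    rw [Finset.sum_comm]
    refine Finset.sum_congr rfl fun z _ => ?_
    rw [Finset.sum_comm]
    have : ∀ w, (∑ ξ : Fin D → ZMod N,
        (a x * (starRingEnd ℂ) (a y) * (starRingEnd ℂ) (a z) * a w) * chi ξ (y + z - x - w))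
        = (a x * (starRingEnd ℂ) (a y) * (starRingEnd ℂ) (a z) * a w) *
            (if y + z - x = w then (N:ℂ)^D else 0) := by
      intro w
      rw [← Finset.mul_sum, sum_chi]
      simp_rw [sub_eq_zero]
    simp_rw [this, mul_ite, mul_zero]
    rw [Finset.sum_ite_eq Finset.univ (y + z - x)
      (fun w => a x * (starRingEnd ℂ) (a y) * (starRingEnd ℂ) (a z) * a w * (N:ℂ)^D)]
    rw [if_pos (Finset.mem_univ _)]
  simp_rw [swap1]
  rw [Finset.mul_sum, Finset.mul_sum]
  refine Finset.sum_congr rfl fun x _ => ?_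
  rw [Finset.mul_sum, Finset.mul_sum]
  refine Finset.sum_congr rfl fun y _ => ?_
  rw [Finset.mul_sum, Finset.mul_sum]
  refine Finset.sum_congr rfl fun z _ => ?_
  have hN : ((N:ℂ))^D ≠ 0 := pow_ne_zero _ hNC
  rw [show (N:ℂ)^(3*D) = ((N:ℂ)^D)^3 by rw [← pow_mul, mul_comm]]
  field_simp


end multidim

section scsection
variable {N : ℕ} [NeZero N]

noncomputable def Sc (S : Set (ZMod N)) (η : ZMod N) : ℂ :=
  (1/(N:ℂ)) * ∑ y : ZMod N, Set.indicator S (fun _ => (1:ℂ)) y * (starRingEnd ℂ) (ee (η * y))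

lemma abs_term_le_one (S : Set (ZMod N)) (η y : ZMod N) :
    ‖Set.indicator S (fun _ => (1:ℂ)) y * (starRingEnd ℂ) (ee (η * y))‖ ≤ 1 := by
  rw [norm_mul, Complex.norm_conj, abs_ee, mul_one]
  by_cases hy : y ∈ S
  · rw [Set.indicator_of_mem hy]; simp
  · rw [Set.indicator_of_notMem hy]; simp

lemma Sc_le_one (S : Set (ZMod N)) (η : ZMod N) : ‖Sc S η‖ ≤ 1 := by
  have hNpos : 0 < N := Nat.pos_of_ne_zero (NeZero.ne N)
  unfold Sc
  rw [norm_mul]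
  have h1 : ‖1/(N:ℂ)‖ = 1/(N:ℝ) := by
    rw [norm_div, norm_one, Complex.norm_natCast]
  rw [h1]
  have h2 : ‖∑ y : ZMod N, Set.indicator S (fun _ => (1:ℂ)) y *
      (starRingEnd ℂ) (ee (η * y))‖ ≤ (N:ℝ) := by
    calc ‖_‖ ≤ ∑ y : ZMod N, ‖Set.indicator S (fun _ => (1:ℂ)) y *
          (starRingEnd ℂ) (ee (η * y))‖ := norm_sum_le _ _
      _ ≤ ∑ _y : ZMod N, (1:ℝ) := Finset.sum_le_sum fun y _ => abs_term_le_one S η y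
      _ = (N:ℝ) := by rw [Finset.sum_const, Finset.card_univ, ZMod.card]; simp
  have hN : (0:ℝ) < N := by exact_mod_cast hNpos
  calc 1/(N:ℝ) * ‖_‖ ≤ 1/(N:ℝ) * (N:ℝ) :=
        mul_le_mul_of_nonneg_left h2 (by positivity)
    _ = 1 := by field_simp

lemma Sc_singleton (S : Set (ZMod N)) (n0 : ZMod N) (hS : S ⊆ {n0}) (η : ZMod N) :
    ‖Sc S η‖ ≤ 1/(N:ℝ) := by
  have hNpos : 0 < N := Nat.pos_of_ne_zero (NeZero.ne N)
  unfold Sc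
  rw [norm_mul]
  have h1 : ‖1/(N:ℂ)‖ = 1/(N:ℝ) := by
    rw [norm_div, norm_one, Complex.norm_natCast]
  rw [h1]
  have h2 : ‖∑ y : ZMod N, Set.indicator S (fun _ => (1:ℂ)) y *
      (starRingEnd ℂ) (ee (η * y))‖ ≤ 1 := by
    calc ‖_‖ ≤ ∑ y : ZMod N, ‖Set.indicator S (fun _ => (1:ℂ)) y *
          (starRingEnd ℂ) (ee (η * y))‖ := norm_sum_le _ _
      _ ≤ ∑ y : ZMod N, (if y = n0 then (1:ℝ) else 0) := by
          refine Finset.sum_le_sum fun y _ => ?_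
          by_cases hy : y = n0
          · rw [if_pos hy]
            exact abs_term_le_one S η y
          · rw [if_neg hy]
            have hyS : y ∉ S := fun h => hy (hS h)
            rw [Set.indicator_of_notMem hyS, zero_mul, norm_zero]
      _ = 1 := by rw [Finset.sum_ite_eq' Finset.univ n0 (fun _ => (1:ℝ)), if_pos (Finset.mem_univ _)]
  have hN : (0:ℝ) < N := by exact_mod_cast hNpos
  calc 1/(N:ℝ) * ‖_‖ ≤ 1/(N:ℝ) * 1 := mul_le_mul_of_nonneg_left h2 (by positivity)
    _ = 1/(N:ℝ) := by ring

lemma Sc_main [Fact N.Prime] (n0 M : ZMod N) (hM : M ≠ 0) (L : ℕ) (η : ZMod N) (hη : η ≠ 0) :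
    ‖Sc {y : ZMod N | ∃ t : ℕ, t < L ∧ y = n0 + M * t} η‖
      ≤ 1/(2 * (mm (η * M) : ℝ)) := by
  have hNpos : 0 < N := Nat.pos_of_ne_zero (NeZero.ne N)
  set L' := min L N with hL'
  set φ : ℕ → ZMod N := fun t => n0 + M * t with hφ
  set S : Set (ZMod N) := {y : ZMod N | ∃ t : ℕ, t < L ∧ y = n0 + M * t} with hS
  set Fs : Finset (ZMod N) := (Finset.range L').image φ with hFs
  -- membership characterization
  have hmem : ∀ y : ZMod N, y ∈ S ↔ y ∈ Fs := by
    intro y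
    constructor
    · rintro ⟨t, ht, rfl⟩
      rw [hFs, Finset.mem_image]
      rcases lt_or_ge t N with htN | htN
      · exact ⟨t, Finset.mem_range.mpr (lt_min ht htN), rfl⟩
      · refine ⟨t % N, Finset.mem_range.mpr ?_, ?_⟩
        · have : L' = N := by omega
          rw [this]
          exact Nat.mod_lt _ hNpos
        · rw [hφ]
          simp only
          congr 1
          congr 1
          rw [ZMod.natCast_mod]
    · intro hy
      rw [hFs, Finset.mem_image] at hy
      obtain ⟨t, ht, rfl⟩ := hy
      rw [Finset.mem_range] at ht
      exact ⟨t, lt_of_lt_of_le ht (min_le_left L N), rfl⟩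
  -- injectivity
  have hinj : ∀ t1 ∈ Finset.range L', ∀ t2 ∈ Finset.range L', φ t1 = φ t2 → t1 = t2 := by
    intro t1 ht1 t2 ht2 h
    rw [Finset.mem_range] at ht1 ht2
    have h1 : t1 < N := lt_of_lt_of_le ht1 (min_le_right L N)
    have h2 : t2 < N := lt_of_lt_of_le ht2 (min_le_right L N)
    rw [hφ] at h
    simp only at h
    have h3 : M * (t1 : ZMod N) = M * (t2 : ZMod N) := by
      have := add_left_cancel h
      exact this
    have h4 : (t1 : ZMod N) = (t2 : ZMod N) := mul_left_cancel₀ hM h3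
    calc t1 = ((t1 : ZMod N)).val := (ZMod.val_cast_of_lt h1).symm
      _ = ((t2 : ZMod N)).val := by rw [h4]
      _ = t2 := ZMod.val_cast_of_lt h2
  -- rewrite the sum
  have hsum : ∑ y : ZMod N, Set.indicator S (fun _ => (1:ℂ)) y * (starRingEnd ℂ) (ee (η * y))
      = ∑ t ∈ Finset.range L', (starRingEnd ℂ) (ee (η * φ t)) := by
    have e1 : ∀ y : ZMod N, Set.indicator S (fun _ => (1:ℂ)) y * (starRingEnd ℂ) (ee (η * y))
        = if y ∈ Fs then (starRingEnd ℂ) (ee (η * y)) else 0 := by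
      intro y
      by_cases hy : y ∈ S
      · rw [Set.indicator_of_mem hy, one_mul, if_pos ((hmem y).mp hy)]
      · rw [Set.indicator_of_notMem hy, zero_mul, if_neg (fun h => hy ((hmem y).mpr h))]
    simp_rw [e1]
    rw [Finset.sum_ite_mem, Finset.univ_inter, hFs]
    rw [Finset.sum_image hinj]
  -- geometric structure
  have hgeom : ∀ t : ℕ, (starRingEnd ℂ) (ee (η * φ t))
      = (starRingEnd ℂ) (ee (η * n0)) * ((starRingEnd ℂ) (ee (η * M)))^t := by
    intro t
    rw [hφ]
    simp only
    rw [show η * (n0 + M * (t:ZMod N)) = η * n0 + (η * M) * (t:ZMod N) by ring]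
    rw [ee_add, ee_nsmul, map_mul, map_pow]
  have hμM : η * M ≠ 0 := mul_ne_zero hη hM
  have habs : ‖∑ y : ZMod N, Set.indicator S (fun _ => (1:ℂ)) y *
      (starRingEnd ℂ) (ee (η * y))‖ ≤ (N:ℝ) / (2 * mm (η * M)) := by
    rw [hsum]
    simp_rw [hgeom]
    rw [← Finset.mul_sum, norm_mul, Complex.norm_conj, abs_ee, one_mul]
    exact geom_bound (η * M) hμM L'
  unfold Sc
  rw [norm_mul]
  have h1 : ‖1/(N:ℂ)‖ = 1/(N:ℝ) := by
    rw [norm_div, norm_one, Complex.norm_natCast]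
  rw [h1]
  have hmmpos : (0:ℝ) < (mm (η * M) : ℝ) := by exact_mod_cast mm_pos hμM
  have hN : (0:ℝ) < N := by exact_mod_cast hNpos
  calc 1/(N:ℝ) * ‖_‖ ≤ 1/(N:ℝ) * ((N:ℝ) / (2 * mm (η * M))) :=
        mul_le_mul_of_nonneg_left habs (by positivity)
    _ = 1/(2 * (mm (η * M) : ℝ)) := by field_simp


end scsection

section prime
variable {N : ℕ} [NeZero N]

/-- reindexing sums over `ZMod N` by multiplication with a nonzero element, `N` prime -/
lemma sum_mul_unit [Fact N.Prime] (F : ZMod N → ℝ) {u : ZMod N} (hu : u ≠ 0) :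
    ∑ η : ZMod N, F (η * u) = ∑ θ : ZMod N, F θ := by
  exact Fintype.sum_equiv (Equiv.mulRight₀ u hu) _ _ (fun η => rfl)

lemma sum_ww_sq [Fact N.Prime] {u : ZMod N} (hu : u ≠ 0) :
    ∑ η : ZMod N, (ww (η * u))^2 ≤ 7 := by
  rw [sum_mul_unit (fun θ => (ww θ)^2) hu]
  have hsplit : (∑ θ ∈ Finset.univ.erase (0:ZMod N), (ww θ)^2) + (ww (0:ZMod N))^2
      = ∑ θ : ZMod N, (ww θ)^2 := Finset.sum_erase_add _ _ (Finset.mem_univ 0)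
  rw [← hsplit, ww_zero]
  have h1 : ∑ θ ∈ Finset.univ.erase (0 : ZMod N), (ww θ)^2
      ≤ 2 * ∑ k ∈ Finset.Ico 1 N, (1 / ff (k+1))^2 := by
    have := sum_g_mm (N := N) (fun k => (1 / ff (k+1))^2) (fun k => sq_nonneg _)
    convert this using 2
    rfl
  have h2 : (2:ℝ) * ∑ k ∈ Finset.Ico 1 N, (1 / ff (k+1))^2 ≤ 6 := by
    have := tail1 (N := N)
    linarith
  norm_num
  linarith [h1, h2]

lemma coord_bound_main [Fact N.Prime] {u : ZMod N} (hu : u ≠ 0) (B : ZMod N → ℝ)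
    (hBnn : ∀ η, 0 ≤ B η) (hB0 : B 0 ≤ 1)
    (hB : ∀ η, η ≠ 0 → B η ≤ 1/(2 * (mm (η * u) : ℝ))) :
    ∑ η : ZMod N, (B η)^2 * (ww (η * u))⁻¹ ≤ 6 := by
  have hsplit : (∑ η ∈ Finset.univ.erase (0:ZMod N), (B η)^2 * (ww (η * u))⁻¹)
      + (B 0)^2 * (ww ((0:ZMod N) * u))⁻¹
      = ∑ η : ZMod N, (B η)^2 * (ww (η * u))⁻¹ :=
    Finset.sum_erase_add _ _ (Finset.mem_univ 0)
  rw [← hsplit]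
  have hzero : (B 0)^2 * (ww ((0:ZMod N) * u))⁻¹ ≤ 1 := by
    rw [zero_mul, ww_zero, inv_one, mul_one]
    nlinarith [hBnn 0, hB0]
  have herase : ∑ η ∈ Finset.univ.erase (0 : ZMod N), (B η)^2 * (ww (η * u))⁻¹
      ≤ ∑ η ∈ Finset.univ.erase (0 : ZMod N), (fun k : ℕ => (1/(2*(k:ℝ)))^2 * ff (k+1)) (mm (η * u)) := by
    refine Finset.sum_le_sum fun η hη => ?_
    rw [Finset.mem_erase] at hη
    have hη0 := hη.1
    have hmu : η * u ≠ 0 := mul_ne_zero hη0 hu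
    have hmm : 0 < mm (η * u) := mm_pos hmu
    have hwinv : (ww (η * u))⁻¹ = ff (mm (η * u) + 1) := by
      unfold ww
      rw [one_div, inv_inv]
    rw [hwinv]
    have hBle := hB η hη0
    have hffpos : 0 < ff (mm (η * u) + 1) := ff_pos (by omega)
    apply mul_le_mul_of_nonneg_right ?_ hffpos.le
    have h2m : (0:ℝ) < 2 * (mm (η * u) : ℝ) := by
      have : (0:ℝ) < (mm (η * u) : ℝ) := by exact_mod_cast hmm
      linarith
    exact pow_le_pow_left₀ (hBnn η) hBle 2
  -- reindex over θ = η * u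
  have hre : ∑ η ∈ Finset.univ.erase (0 : ZMod N),
      (fun k : ℕ => (1/(2*(k:ℝ)))^2 * ff (k+1)) (mm (η * u))
      = ∑ θ ∈ Finset.univ.erase (0 : ZMod N),
        (fun k : ℕ => (1/(2*(k:ℝ)))^2 * ff (k+1)) (mm θ) := by
    refine Finset.sum_nbij' (fun η => η * u) (fun θ => θ * u⁻¹) ?_ ?_ ?_ ?_ ?_
    · intro η hη
      rw [Finset.mem_erase] at hη ⊢
      exact ⟨mul_ne_zero hη.1 hu, Finset.mem_univ _⟩
    · intro θ hθ
      rw [Finset.mem_erase] at hθ ⊢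
      exact ⟨mul_ne_zero hθ.1 (inv_ne_zero hu), Finset.mem_univ _⟩
    · intro η _
      field_simp
    · intro θ _
      field_simp
    · intro η _
      rfl
  have htail : ∑ θ ∈ Finset.univ.erase (0 : ZMod N),
      (fun k : ℕ => (1/(2*(k:ℝ)))^2 * ff (k+1)) (mm θ) ≤ 5 := by
    have hnn : ∀ k : ℕ, 0 ≤ (1/(2*(k:ℝ)))^2 * ff (k+1) := by
      intro k
      have := ff_pos (k := k+1) (by omega)
      positivity
    have h1 := sum_g_mm (N := N) (fun k : ℕ => (1/(2*(k:ℝ)))^2 * ff (k+1)) hnn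
    have h2 := tail2 (N := N)
    simp only at h1 ⊢
    linarith
  have : ∑ η ∈ Finset.univ.erase (0 : ZMod N), (B η)^2 * (ww (η * u))⁻¹ ≤ 5 :=
    le_trans herase (le_of_eq hre |>.trans htail)
  linarith [hzero, this]

end prime

section assembly
variable {N D : ℕ} [NeZero N]

lemma coord_bound_small (u : ZMod N) (B : ZMod N → ℝ) (hBnn : ∀ η, 0 ≤ B η)
    (hB : ∀ η, B η ≤ 1/(N:ℝ)) :
    ∑ η : ZMod N, (B η)^2 * (ww (η * u))⁻¹ ≤ 6 := by
  have hNpos : 0 < N := Nat.pos_of_ne_zero (NeZero.ne N)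
  have hNR : (0:ℝ) < N := by exact_mod_cast hNpos
  have hterm : ∀ η : ZMod N, (B η)^2 * (ww (η * u))⁻¹ ≤ (1/(N:ℝ))^2 * N := by
    intro η
    have h1 : (ww (η * u))⁻¹ = ff (mm (η * u) + 1) := by
      unfold ww; rw [one_div, inv_inv]
    have h2 : ff (mm (η * u) + 1) ≤ (N:ℝ) := by
      unfold ff
      have hq := qq_ge_one (k := mm (η * u) + 1) (by omega)
      have hle := mm_le (η * u)
      calc ((mm (η * u) + 1 : ℕ):ℝ) / qq (mm (η * u) + 1)
          ≤ ((mm (η * u) + 1 : ℕ):ℝ) / 1 := by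
            apply div_le_div_of_nonneg_left ?_ ?_ hq
            · positivity
            · norm_num
        _ = ((mm (η * u) + 1 : ℕ):ℝ) := by norm_num
        _ ≤ (N:ℝ) := by exact_mod_cast hle
    rw [h1]
    have h3 : (B η)^2 ≤ (1/(N:ℝ))^2 := pow_le_pow_left₀ (hBnn η) (hB η) 2
    have h4 : 0 ≤ ff (mm (η * u) + 1) := (ff_pos (by omega)).le
    calc (B η)^2 * ff (mm (η * u) + 1) ≤ (1/(N:ℝ))^2 * ff (mm (η * u) + 1) :=
          mul_le_mul_of_nonneg_right h3 h4
      _ ≤ (1/(N:ℝ))^2 * N := mul_le_mul_of_nonneg_left h2 (by positivity)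
  calc ∑ η : ZMod N, (B η)^2 * (ww (η * u))⁻¹ ≤ ∑ _η : ZMod N, (1/(N:ℝ))^2 * N :=
        Finset.sum_le_sum fun η _ => hterm η
    _ = (N:ℝ) * ((1/(N:ℝ))^2 * N) := by
        rw [Finset.sum_const, Finset.card_univ, ZMod.card, nsmul_eq_mul]
    _ = 1 := by field_simp
    _ ≤ 6 := by norm_num

lemma abs_gowers (a : (Fin D → ZMod N) → ℂ) :
    ‖gowersU2p4 a‖ = ∑ ξ, (‖fhat a ξ‖)^4 := by
  have h : gowersU2p4 a = ((∑ ξ, (‖fhat a ξ‖)^4 : ℝ) : ℂ) := by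
    rw [gowers_A a, ← gowers_B a]
    push_cast
    refine Finset.sum_congr rfl fun ξ _ => ?_
    rw [show (fhat a ξ)^2 * ((starRingEnd ℂ) (fhat a ξ))^2
        = (fhat a ξ * (starRingEnd ℂ) (fhat a ξ))^2 by ring, Complex.mul_conj,
      Complex.normSq_eq_norm_sq]
    push_cast
    ring
  rw [h, Complex.norm_real, Real.norm_eq_abs]
  exact abs_of_nonneg (Finset.sum_nonneg fun ξ _ => by positivity)

lemma fhat_prod (bi : Fin D → ZMod N → ℂ) (ξ : Fin D → ZMod N) :
    fhat (fun n => ∏ i, bi i (n i)) ξ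
      = ∏ i, ((1/(N:ℂ)) * ∑ y : ZMod N, bi i y * (starRingEnd ℂ) (ee (ξ i * y))) := by
  unfold fhat chi
  have e1 : ∀ n : Fin D → ZMod N,
      (∏ i, bi i (n i)) * (starRingEnd ℂ) (∏ i, ee (ξ i * n i))
      = ∏ i, (bi i (n i) * (starRingEnd ℂ) (ee (ξ i * n i))) := by
    intro n
    rw [map_prod, ← Finset.prod_mul_distrib]
  simp_rw [e1]
  rw [← Fintype.prod_sum (fun i y => bi i y * (starRingEnd ℂ) (ee (ξ i * y)))]
  rw [Finset.prod_mul_distrib, Finset.prod_const, Finset.card_univ, Fintype.card_fin]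
  congr 1
  rw [div_pow, one_pow]


end assembly

end S13

open S13 in
/-- For `N` prime, averages of any function over `D`-dimensional
arithmetic progressions in `(ℤ/Nℤ)^D` are bounded by `C(D)` times the `U²`-norm. -/
theorem stmt13 (D : ℕ) (hD : 1 ≤ D) :
    ∃ C : ℝ, 0 < C ∧
      ∀ (N : ℕ) [NeZero N], N.Prime →
        ∀ (a : (Fin D → ZMod N) → ℂ) (n₀ M : Fin D → ZMod N) (L : Fin D → ℕ),
          (‖(1 / (N : ℂ) ^ D) *
              ∑ n : Fin D → ZMod N,
                Set.indicator
                  {x : Fin D → ZMod N |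
                    ∃ t : Fin D → ℕ, (∀ i, t i < L i) ∧ ∀ i, x i = n₀ i + M i * (t i : ZMod N)}
                  a n‖) ^ 4
            ≤ C ^ 4 * ‖gowersU2p4 a‖ := by
  refine ⟨252^D, by positivity, ?_⟩
  intro N _ hN a n₀ M L
  haveI : Fact N.Prime := ⟨hN⟩
  set Pset : Set (Fin D → ZMod N) :=
    {x : Fin D → ZMod N |
      ∃ t : Fin D → ℕ, (∀ i, t i < L i) ∧ ∀ i, x i = n₀ i + M i * (t i : ZMod N)} with hPset
  set Si : Fin D → Set (ZMod N) :=
    fun i => {y : ZMod N | ∃ t : ℕ, t < L i ∧ y = n₀ i + M i * t} with hSi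
  set b : (Fin D → ZMod N) → ℂ :=
    fun n => ∏ i, Set.indicator (Si i) (fun _ => (1:ℂ)) (n i) with hb
  set u : Fin D → ZMod N := fun i => if M i = 0 then 1 else M i with hu
  have hune : ∀ i, u i ≠ 0 := by
    intro i
    rw [hu]
    simp only
    split_ifs with h
    · exact one_ne_zero
    · exact h
  -- Step 1 : indicator identity
  have step1 : ∀ n, Set.indicator Pset a n = a n * (starRingEnd ℂ) (b n) := by
    intro n
    by_cases hn : n ∈ Pset
    · rw [Set.indicator_of_mem hn]
      obtain ⟨t, ht, hx⟩ := hn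
      have hbn : b n = 1 := by
        rw [hb]
        refine Finset.prod_eq_one fun i _ => ?_
        have hmem : n i ∈ Si i := by
          rw [hSi]; exact ⟨t i, ht i, hx i⟩
        rw [Set.indicator_of_mem hmem]
      rw [hbn, map_one, mul_one]
    · rw [Set.indicator_of_notMem hn]
      have hex : ∃ i, n i ∉ Si i := by
        by_contra hc
        push_neg at hc
        simp only [hSi, Set.mem_setOf_eq] at hc
        choose t ht1 ht2 using hc
        refine hn ?_
        rw [hPset]
        exact ⟨t, ht1, ht2⟩
      obtain ⟨i, hi⟩ := hex
      have hbn : b n = 0 := by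
        rw [hb]
        exact Finset.prod_eq_zero (Finset.mem_univ i)
          (by rw [Set.indicator_of_notMem hi])
      rw [hbn, map_zero, mul_zero]
  -- Step 2 : Fourier factorization of b
  have step2 : ∀ ξ : Fin D → ZMod N, fhat b ξ = ∏ i, Sc (Si i) (ξ i) := by
    intro ξ
    rw [hb, fhat_prod (fun i => Set.indicator (Si i) (fun _ => (1:ℂ))) ξ]
    rfl
  set Bf : Fin D → ZMod N → ℝ := fun i η => ‖Sc (Si i) η‖ with hBf
  have hBfnn : ∀ i η, 0 ≤ Bf i η := fun i η => norm_nonneg _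
  have hcoord : ∀ i, ∑ η : ZMod N, (Bf i η)^2 * (ww (η * u i))⁻¹ ≤ 6 := by
    intro i
    by_cases hM : M i = 0
    · refine coord_bound_small (u i) (Bf i) (hBfnn i) ?_
      intro η
      refine Sc_singleton (Si i) (n₀ i) ?_ η
      intro y hy
      rw [hSi] at hy
      obtain ⟨t, _, rfl⟩ := hy
      rw [hM]
      simp
    · have hM' : u i = M i := by rw [hu]; simp [hM]
      refine coord_bound_main (hune i) (Bf i) (hBfnn i) (Sc_le_one _ 0) ?_
      intro η hη
      rw [hM']
      have := Sc_main (n₀ i) (M i) hM (L i) η hη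
      rw [hBf]
      simp only
      convert this using 3
  -- Step 4 : Parseval
  have step4 : (1 / (N : ℂ) ^ D) * (∑ n, Set.indicator Pset a n)
      = ∑ ξ, fhat a ξ * (starRingEnd ℂ) (fhat b ξ) := by
    rw [parseval a b]
    congr 1
    exact Finset.sum_congr rfl fun n _ => step1 n
  set A : (Fin D → ZMod N) → ℝ := fun ξ => ‖fhat a ξ‖ with hA
  set Bb : (Fin D → ZMod N) → ℝ := fun ξ => ‖fhat b ξ‖ with hBb
  have hAnn : ∀ ξ, 0 ≤ A ξ := fun ξ => norm_nonneg _
  have hBbnn : ∀ ξ, 0 ≤ Bb ξ := fun ξ => norm_nonneg _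
  set T : ℝ := ∑ ξ, A ξ * Bb ξ with hT
  have hTnn : 0 ≤ T :=
    Finset.sum_nonneg fun ξ _ => mul_nonneg (hAnn ξ) (hBbnn ξ)
  have step5 : ‖(1 / (N : ℂ) ^ D) * ∑ n, Set.indicator Pset a n‖ ≤ T := by
    rw [step4, hT]
    calc ‖∑ ξ, fhat a ξ * (starRingEnd ℂ) (fhat b ξ)‖
        ≤ ∑ ξ, ‖fhat a ξ * (starRingEnd ℂ) (fhat b ξ)‖ :=
          norm_sum_le _ _
      _ = ∑ ξ, A ξ * Bb ξ := by
          refine Finset.sum_congr rfl fun ξ _ => ?_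
          rw [norm_mul, Complex.norm_conj]
  set vv : (Fin D → ZMod N) → ℝ := fun ξ => ∏ i, ww (ξ i * u i) with hvv
  have hvpos : ∀ ξ, 0 < vv ξ := fun ξ => Finset.prod_pos fun i _ => ww_pos _
  have hCS1 : T^2 ≤ (∑ ξ, (A ξ)^2 * vv ξ) * (∑ ξ, (Bb ξ)^2 * (vv ξ)⁻¹) := by
    have h := Finset.sum_mul_sq_le_sq_mul_sq Finset.univ
      (fun ξ => A ξ * Real.sqrt (vv ξ)) (fun ξ => Bb ξ * (Real.sqrt (vv ξ))⁻¹)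
    have e1 : ∑ ξ, (A ξ * Real.sqrt (vv ξ)) * (Bb ξ * (Real.sqrt (vv ξ))⁻¹) = T := by
      rw [hT]
      refine Finset.sum_congr rfl fun ξ _ => ?_
      have hs : Real.sqrt (vv ξ) ≠ 0 := (Real.sqrt_pos.mpr (hvpos ξ)).ne'
      field_simp
    have e2 : ∑ ξ, (A ξ * Real.sqrt (vv ξ))^2 = ∑ ξ, (A ξ)^2 * vv ξ := by
      refine Finset.sum_congr rfl fun ξ _ => ?_
      rw [mul_pow, Real.sq_sqrt (hvpos ξ).le]
    have e3 : ∑ ξ, (Bb ξ * (Real.sqrt (vv ξ))⁻¹)^2 = ∑ ξ, (Bb ξ)^2 * (vv ξ)⁻¹ := by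
      refine Finset.sum_congr rfl fun ξ _ => ?_
      rw [mul_pow, inv_pow, Real.sq_sqrt (hvpos ξ).le]
    rw [e1, e2, e3] at h
    exact h
  have hCS2 : (∑ ξ, (A ξ)^2 * vv ξ)^2 ≤ (∑ ξ, (A ξ)^4) * (∑ ξ, (vv ξ)^2) := by
    have h := Finset.sum_mul_sq_le_sq_mul_sq Finset.univ (fun ξ => (A ξ)^2) vv
    have e : ∀ ξ : Fin D → ZMod N, ((A ξ)^2)^2 = (A ξ)^4 := fun ξ => by ring
    simp_rw [e] at h
    exact h
  have hV : ∑ ξ : Fin D → ZMod N, (vv ξ)^2 ≤ 7^D := by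
    have e : ∑ ξ : Fin D → ZMod N, (vv ξ)^2
        = ∏ i, ∑ η : ZMod N, (ww (η * u i))^2 := by
      rw [hvv]
      simp_rw [← Finset.prod_pow]
      rw [← Fintype.prod_sum (fun i η => (ww (η * u i))^2)]
    rw [e]
    calc ∏ i, ∑ η : ZMod N, (ww (η * u i))^2 ≤ ∏ _i : Fin D, (7:ℝ) := by
          refine Finset.prod_le_prod ?_ ?_
          · intro i _
            exact Finset.sum_nonneg fun η _ => sq_nonneg _
          · intro i _
            exact sum_ww_sq (hune i)
      _ = 7^D := by rw [Finset.prod_const, Finset.card_univ, Fintype.card_fin]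
  have hBv : ∑ ξ : Fin D → ZMod N, (Bb ξ)^2 * (vv ξ)⁻¹ ≤ 6^D := by
    have e : ∑ ξ : Fin D → ZMod N, (Bb ξ)^2 * (vv ξ)⁻¹
        = ∏ i, ∑ η : ZMod N, (Bf i η)^2 * (ww (η * u i))⁻¹ := by
      have hBbp : ∀ ξ, Bb ξ = ∏ i, Bf i (ξ i) := by
        intro ξ
        rw [hBb]
        simp only
        rw [step2 ξ, Complex.norm_prod]
      simp_rw [hBbp, hvv]
      have e2 : ∀ ξ : Fin D → ZMod N,
          (∏ i, Bf i (ξ i))^2 * (∏ i, ww (ξ i * u i))⁻¹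
          = ∏ i, ((Bf i (ξ i))^2 * (ww (ξ i * u i))⁻¹) := by
        intro ξ
        rw [← Finset.prod_pow, ← Finset.prod_inv_distrib, ← Finset.prod_mul_distrib]
      simp_rw [e2]
      rw [← Fintype.prod_sum (fun i η => (Bf i η)^2 * (ww (η * u i))⁻¹)]
    rw [e]
    calc ∏ i, ∑ η : ZMod N, (Bf i η)^2 * (ww (η * u i))⁻¹ ≤ ∏ _i : Fin D, (6:ℝ) := by
          refine Finset.prod_le_prod ?_ ?_
          · intro i _
            exact Finset.sum_nonneg fun η _ =>
              mul_nonneg (sq_nonneg _) (inv_nonneg.mpr (ww_pos _).le)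
          · intro i _
            exact hcoord i
      _ = 6^D := by rw [Finset.prod_const, Finset.card_univ, Fintype.card_fin]
  -- final numeric assembly
  have hS4nn : 0 ≤ ∑ ξ : Fin D → ZMod N, (A ξ)^4 :=
    Finset.sum_nonneg fun ξ _ => by positivity
  have hXnn : 0 ≤ ∑ ξ, (A ξ)^2 * vv ξ :=
    Finset.sum_nonneg fun ξ _ => mul_nonneg (sq_nonneg _) (hvpos ξ).le
  have hYnn : 0 ≤ ∑ ξ, (Bb ξ)^2 * (vv ξ)⁻¹ :=
    Finset.sum_nonneg fun ξ _ => mul_nonneg (sq_nonneg _) (inv_nonneg.mpr (hvpos ξ).le)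
  have habs4 : (‖(1 / (N : ℂ) ^ D) * ∑ n, Set.indicator Pset a n‖)^4 ≤ T^4 :=
    pow_le_pow_left₀ (norm_nonneg _) step5 4
  have hT4 : T^4 ≤ (∑ ξ, (A ξ)^4) * (7^D * (6^D)^2) := by
    calc T^4 = (T^2)^2 := by ring
      _ ≤ ((∑ ξ, (A ξ)^2 * vv ξ) * (∑ ξ, (Bb ξ)^2 * (vv ξ)⁻¹))^2 :=
          pow_le_pow_left₀ (sq_nonneg T) hCS1 2
      _ = (∑ ξ, (A ξ)^2 * vv ξ)^2 * (∑ ξ, (Bb ξ)^2 * (vv ξ)⁻¹)^2 := by ring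
      _ ≤ ((∑ ξ, (A ξ)^4) * (∑ ξ : Fin D → ZMod N, (vv ξ)^2))
            * (∑ ξ, (Bb ξ)^2 * (vv ξ)⁻¹)^2 :=
          mul_le_mul_of_nonneg_right hCS2 (sq_nonneg _)
      _ ≤ ((∑ ξ, (A ξ)^4) * 7^D) * (6^D)^2 := by
          refine mul_le_mul ?_ ?_ (sq_nonneg _) ?_
          · exact mul_le_mul_of_nonneg_left hV hS4nn
          · exact pow_le_pow_left₀ hYnn hBv 2
          · exact mul_nonneg hS4nn (by positivity)
      _ = (∑ ξ, (A ξ)^4) * (7^D * (6^D)^2) := by ring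
  have hconst : (7:ℝ)^D * ((6:ℝ)^D)^2 ≤ ((252:ℝ)^D)^4 := by
    have h1 : (7:ℝ)^D * ((6:ℝ)^D)^2 = (252:ℝ)^D := by
      rw [← pow_mul, mul_comm D 2, pow_mul, ← mul_pow]
      norm_num
    rw [h1]
    refine le_self_pow₀ (one_le_pow₀ (by norm_num)) (by norm_num)
  have hgow : ∑ ξ, (A ξ)^4 = ‖gowersU2p4 a‖ := (abs_gowers a).symm
  calc (‖(1 / (N : ℂ) ^ D) * ∑ n, Set.indicator Pset a n‖)^4
      ≤ T^4 := habs4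
    _ ≤ (∑ ξ, (A ξ)^4) * (7^D * (6^D)^2) := hT4
    _ ≤ (∑ ξ, (A ξ)^4) * ((252:ℝ)^D)^4 :=
        mul_le_mul_of_nonneg_left hconst hS4nn
    _ = ((252:ℝ)^D)^4 * ‖gowersU2p4 a‖ := by rw [hgow]; ring
end

section
/- Let f: ℤ → ℂ be a function with |f| ≤ 1. Then the following are equivalent: (1) for all a, b ∈ ℤ with a ≠ 0, lim_{N→∞} (1/N) Σ_{n=0}^{N−1} f(an+b) = 0; (2) lim_{N→∞} sup_{L ≥ 1, a≠0, b} |(1/(2N+1)) Σ_{n=−N}^{N} 1_{P_{a,b,L}}(n) f(n)| = 0, where P_{a,b,L} := {am+b : 0 ≤ m ≤ L−1}. In other words, aperiodicity of f along full arithmetic progressions implies uniform smallness of its averages over all finite arithmetic progressions inside [−N, N]. -/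
open Filter
namespace Stmt15Aux

noncomputable def T (f : ℤ → ℂ) (a b : ℤ) (n : ℕ) : ℂ :=
  ∑ m ∈ Finset.range n, f (a * m + b)

noncomputable def E (f : ℤ → ℂ) (a r : ℤ) (t : ℤ) : ℂ :=
  if 0 ≤ t then T f a r t.toNat else - T f (-a) (r - a) (-t).toNat

lemma T_succ (f : ℤ → ℂ) (a b : ℤ) (n : ℕ) :
    T f a b (n + 1) = T f a b n + f (a * n + b) := Finset.sum_range_succ _ _

lemma T_abs_le (f : ℤ → ℂ) (hf : ∀ n, ‖f n‖ ≤ 1) (a b : ℤ) (n : ℕ) :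
    ‖T f a b n‖ ≤ n := by
  calc ‖T f a b n‖ ≤ ∑ m ∈ Finset.range n, ‖f (a*m+b)‖ := by
        exact norm_sum_le _ _
    _ ≤ ∑ m ∈ Finset.range n, 1 := Finset.sum_le_sum (fun i _ => hf _)
    _ = n := by simp

lemma E_step (f : ℤ → ℂ) (a r t : ℤ) :
    E f a r (t + 1) - E f a r t = f (a * t + r) := by
  rcases le_or_gt 0 t with h | h
  · rw [E, E, if_pos (by omega : (0:ℤ) ≤ t + 1), if_pos h]
    have h1 : (t + 1).toNat = t.toNat + 1 := by omega
    rw [h1, T_succ]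
    have h2 : ((t.toNat : ℤ)) = t := Int.toNat_of_nonneg h
    rw [h2]; ring
  · have hE1 : E f a r (t + 1) = - T f (-a) (r - a) (-(t+1)).toNat := by
      by_cases h2 : t + 1 = 0
      · rw [E, if_pos (by omega)]
        have h3 : (t + 1).toNat = 0 := by omega
        have h4 : (-(t + 1)).toNat = 0 := by omega
        rw [h3, h4]; simp [T]
      · rw [E, if_neg (by omega)]
    rw [hE1, E, if_neg (by omega)]
    have hn : (-t).toNat = (-(t + 1)).toNat + 1 := by omega
    rw [hn, T_succ]
    have hc : (((-(t + 1)).toNat : ℤ)) = -t - 1 := by omega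
    rw [hc]
    have harg : (-a) * (-t - 1) + (r - a) = a * t + r := by ring
    rw [harg]; ring

lemma T_eq_E (f : ℤ → ℂ) (a r q : ℤ) (n : ℕ) :
    T f a (a * q + r) n = E f a r (q + n) - E f a r q := by
  induction n with
  | zero => simp [T]
  | succ n ih =>
    rw [T_succ, ih]
    have h := E_step f a r (q + n)
    have h1 : (q + ((n + 1 : ℕ) : ℤ)) = (q + n) + 1 := by push_cast; ring
    have h2 : a * (q + (n:ℤ)) + r = a * n + (a * q + r) := by ring
    rw [h1, ← sub_add_cancel (E f a r (q + n + 1)) (E f a r (q + n)), h, h2]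
    ring

lemma ind_sum (f : ℤ → ℂ) (N L : ℕ) (a b : ℤ) (ha : a ≠ 0) :
    ∑ n ∈ Finset.Icc (-(N : ℤ)) (N : ℤ),
        Set.indicator {x : ℤ | ∃ m : ℕ, m < L ∧ x = a * m + b} f n
      = ∑ m ∈ Finset.filter
          (fun m : ℕ => -(N:ℤ) ≤ a * m + b ∧ a * m + b ≤ (N:ℤ)) (Finset.range L),
          f (a * m + b) := by
  classical
  have h0 := Finset.sum_indicator_eq_sum_filter (Finset.Icc (-(N : ℤ)) (N : ℤ))
    (fun _ x => f x) (fun _ => {x : ℤ | ∃ m : ℕ, m < L ∧ x = a * m + b}) id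
  simp only [id] at h0
  rw [h0]
  rw [show Finset.filter (fun i => i ∈ {x : ℤ | ∃ m : ℕ, m < L ∧ x = a * m + b})
        (Finset.Icc (-(N : ℤ)) (N : ℤ))
      = Finset.image (fun m : ℕ => a * m + b)
          (Finset.filter (fun m : ℕ => -(N:ℤ) ≤ a * m + b ∧ a * m + b ≤ (N:ℤ))
            (Finset.range L)) from ?_]
  · rw [Finset.sum_image]
    intro x hx y hy hxy
    have h1 : a * (x:ℤ) = a * y := by linarith
    have h2 : ((x:ℤ)) = y := mul_left_cancel₀ ha h1
    exact_mod_cast h2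
  · ext n
    simp only [Finset.mem_filter, Finset.mem_Icc, Set.mem_setOf_eq, Finset.mem_image,
      Finset.mem_range]
    constructor
    · rintro ⟨⟨h1, h2⟩, m, hm, rfl⟩
      exact ⟨m, ⟨hm, h1, h2⟩, rfl⟩
    · rintro ⟨m, ⟨hm, h1, h2⟩, rfl⟩
      exact ⟨⟨h1, h2⟩, m, hm, rfl⟩

lemma filter_eq_Icc {N L : ℕ} {a b : ℤ} (ha : a ≠ 0)
    (s : Finset ℕ)
    (hs : s = Finset.filter (fun m : ℕ => -(N:ℤ) ≤ a * m + b ∧ a * m + b ≤ (N:ℤ))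
      (Finset.range L))
    (hne : s.Nonempty) : s = Finset.Icc (s.min' hne) (s.max' hne) := by
  ext m
  simp only [Finset.mem_Icc]
  constructor
  · intro hm; exact ⟨Finset.min'_le s m hm, Finset.le_max' s m hm⟩
  · rintro ⟨h0, h1⟩
    have hmem : ∀ x : ℕ, x ∈ s ↔ x < L ∧ (-(N:ℤ) ≤ a * x + b ∧ a * x + b ≤ (N:ℤ)) := by
      intro x; rw [hs]; simp [Finset.mem_filter, Finset.mem_range]
    obtain ⟨hL0, ha0, hb0⟩ := (hmem _).mp (s.min'_mem hne)
    obtain ⟨hL1, ha1, hb1⟩ := (hmem _).mp (s.max'_mem hne)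
    rw [hmem]
    have hc0 : ((s.min' hne : ℤ)) ≤ (m:ℤ) := by exact_mod_cast h0
    have hc1 : ((m:ℤ)) ≤ (s.max' hne : ℤ) := by exact_mod_cast h1
    refine ⟨by omega, ?_, ?_⟩
    · rcases lt_or_gt_of_ne ha with hneg | hpos
      · nlinarith
      · nlinarith
    · rcases lt_or_gt_of_ne ha with hneg | hpos
      · nlinarith
      · nlinarith

lemma exists_bound (f : ℤ → ℂ) (hf : ∀ n, ‖f n‖ ≤ 1) (a b : ℤ)
    (h : Tendsto (fun N : ℕ => (1 / (N : ℂ)) * ∑ n ∈ Finset.range N, f (a * n + b))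
      atTop (nhds 0)) {ε : ℝ} (hε : 0 < ε) :
    ∃ C : ℝ, 0 ≤ C ∧ ∀ n : ℕ, ‖T f a b n‖ ≤ ε * n + C := by
  rw [Metric.tendsto_atTop] at h
  obtain ⟨n₀, hn₀⟩ := h ε hε
  refine ⟨n₀, Nat.cast_nonneg _, fun n => ?_⟩
  by_cases hn : n₀ ≤ n ∧ n ≠ 0
  · have h2 : dist ((1 / (n : ℂ)) * T f a b n) 0 < ε := hn₀ n hn.1
    rw [dist_zero_right, norm_mul, norm_div, norm_one,
      Complex.norm_natCast] at h2
    have hnpos : (0:ℝ) < n := by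
      have := hn.2; positivity
    rw [one_div, inv_mul_lt_iff₀ hnpos] at h2
    have habs := norm_nonneg (T f a b n)
    have hn₀' : (0:ℝ) ≤ (n₀:ℝ) := Nat.cast_nonneg _
    nlinarith
  · have h1 : (n:ℝ) ≤ n₀ ∨ n = 0 := by
      rcases Decidable.not_and_iff_or_not.mp hn with h | h
      · left; exact_mod_cast Nat.le_of_lt (Nat.lt_of_not_le h)
      · right; simpa using h
    have h3 := T_abs_le f hf a b n
    rcases h1 with h1 | h1
    · have hε' := hε.le
      nlinarith
    · subst h1; simp [T]

lemma E_abs_le (f : ℤ → ℂ) {a r : ℤ} {ε C : ℝ}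
    (h1 : ∀ n : ℕ, ‖T f a r n‖ ≤ ε * n + C)
    (h2 : ∀ n : ℕ, ‖T f (-a) (r - a) n‖ ≤ ε * n + C)
    (t : ℤ) : ‖E f a r t‖ ≤ ε * (t.natAbs : ℝ) + C := by
  rw [E]
  split_ifs with ht
  · rw [show t.toNat = t.natAbs by omega]; exact h1 _
  · rw [show ‖-T f (-a) (r - a) (-t).toNat‖
        = ‖T f (-a) (r - a) (-t).toNat‖ by simp,
      show (-t).toNat = t.natAbs by omega]
    exact h2 _


lemma backward_aux (f : ℤ → ℂ) (hf : ∀ n, ‖f n‖ ≤ 1)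
    (H : ∀ ε : ℝ, 0 < ε → ∃ N₀ : ℕ, ∀ N : ℕ, N₀ ≤ N →
      ∀ (L : ℕ) (a b : ℤ), a ≠ 0 →
        ‖(1 / (2 * (N : ℂ) + 1)) *
            ∑ n ∈ Finset.Icc (-(N : ℤ)) (N : ℤ),
              Set.indicator {x : ℤ | ∃ m : ℕ, m < L ∧ x = a * m + b} f n‖ ≤ ε)
    (a b : ℤ) (ha : a ≠ 0) :
    Tendsto (fun N : ℕ => (1 / (N : ℂ)) * ∑ n ∈ Finset.range N, f (a * n + b))
      atTop (nhds 0) := by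
  rw [Metric.tendsto_atTop]
  intro ε' hε'
  set D : ℝ := 2 * (a.natAbs : ℝ) + 2 * (b.natAbs : ℝ) + 2 with hD
  have hD0 : (0:ℝ) < D := by positivity
  obtain ⟨N₀, hN₀⟩ := H (ε' / D) (by positivity)
  refine ⟨N₀ + 1, fun L hL => ?_⟩
  set N : ℕ := a.natAbs * (L - 1) + b.natAbs with hN
  have hLpos : 1 ≤ L := by omega
  have hapos : 1 ≤ a.natAbs := Int.natAbs_pos.mpr ha
  have hNN₀ : N₀ ≤ N := by
    have h1 : L - 1 ≤ a.natAbs * (L - 1) := Nat.le_mul_of_pos_left _ (by omega)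
    omega
  have key := hN₀ N hNN₀ L a b ha
  rw [ind_sum f N L a b ha] at key
  have hNval : ((N:ℤ)) = |a| * ((L:ℤ) - 1) + |b| := by
    rw [hN]
    push_cast [Nat.cast_sub hLpos, Int.natCast_natAbs]
    ring
  have hall : ∀ m ∈ Finset.range L, -(N:ℤ) ≤ a * m + b ∧ a * m + b ≤ (N:ℤ) := by
    intro m hm
    rw [Finset.mem_range] at hm
    have hm' : (m:ℤ) ≤ (L:ℤ) - 1 := by
      have : (m:ℤ) < (L:ℤ) := by exact_mod_cast hm
      omega
    have h1 : |a * m + b| ≤ (N:ℤ) := by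
      calc |a * (m:ℤ) + b| ≤ |a * m| + |b| := abs_add_le _ _
        _ = |a| * m + |b| := by
            rw [abs_mul, abs_of_nonneg (by positivity : (0:ℤ) ≤ (m:ℤ))]
        _ ≤ |a| * ((L:ℤ) - 1) + |b| := by
            have := mul_le_mul_of_nonneg_left hm' (abs_nonneg a)
            linarith
        _ = N := hNval.symm
    have h2 := abs_le.mp h1
    exact ⟨by linarith [h2.1], h2.2⟩
  rw [Finset.filter_true_of_mem hall] at key
  rw [dist_zero_right, norm_mul, norm_div, norm_one, Complex.norm_natCast]
  rw [norm_mul, norm_div, norm_one] at key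
  have habs2N : ‖2 * (N:ℂ) + 1‖ = 2 * (N:ℝ) + 1 := by
    rw [show (2 * (N:ℂ) + 1) = (((2 * (N:ℝ) + 1) : ℝ) : ℂ) by push_cast; ring,
      Complex.norm_real, Real.norm_eq_abs, abs_of_pos (by positivity)]
  rw [habs2N] at key
  have hLpos' : (0:ℝ) < L := by exact_mod_cast hLpos
  rw [one_div, inv_mul_lt_iff₀ hLpos']
  rw [one_div, inv_mul_le_iff₀ (by positivity)] at key
  have hNvalR : ((N:ℝ)) = (a.natAbs : ℝ) * ((L:ℝ) - 1) + (b.natAbs : ℝ) := by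
    rw [hN]; push_cast [Nat.cast_sub hLpos]; ring
  have hL1 : (1:ℝ) ≤ L := by exact_mod_cast hLpos
  have hkey2 : 2 * (N:ℝ) + 1 < D * L := by
    rw [hNvalR, hD]
    nlinarith [Nat.cast_nonneg (α := ℝ) a.natAbs, Nat.cast_nonneg (α := ℝ) b.natAbs]
  calc ‖∑ n ∈ Finset.range L, f (a * n + b)‖
      ≤ (2 * (N:ℝ) + 1) * (ε' / D) := key
    _ < (D * L) * (ε' / D) := mul_lt_mul_of_pos_right hkey2 (by positivity)
    _ = L * ε' := by field_simp


lemma prefactor (N : ℕ) (z : ℂ) :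
    ‖(1 / (2 * (N:ℂ) + 1)) * z‖ = (1 / (2 * (N:ℝ) + 1)) * ‖z‖ := by
  rw [norm_mul, norm_div, norm_one]
  congr 2
  rw [show (2 * (N:ℂ) + 1) = (((2 * (N:ℝ) + 1) : ℝ) : ℂ) by push_cast; ring,
    Complex.norm_real, Real.norm_eq_abs, abs_of_pos (by positivity)]

lemma forward_aux (f : ℤ → ℂ) (hf : ∀ n, ‖f n‖ ≤ 1)
    (H : ∀ a b : ℤ, a ≠ 0 →
      Tendsto (fun N : ℕ => (1 / (N : ℂ)) * ∑ n ∈ Finset.range N, f (a * n + b))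
        atTop (nhds 0)) :
    ∀ ε₀ : ℝ, 0 < ε₀ → ∃ N₀ : ℕ, ∀ N : ℕ, N₀ ≤ N →
      ∀ (L : ℕ) (a b : ℤ), a ≠ 0 →
        ‖(1 / (2 * (N : ℂ) + 1)) *
            ∑ n ∈ Finset.Icc (-(N : ℤ)) (N : ℤ),
              Set.indicator {x : ℤ | ∃ m : ℕ, m < L ∧ x = a * m + b} f n‖ ≤ ε₀ := by
  intro ε₀ hε₀
  set A : ℕ := ⌈2 / ε₀⌉₊ with hAdef
  have hA2 : (2 / ε₀ : ℝ) ≤ A := Nat.le_ceil _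
  set ε : ℝ := ε₀ / 4 with hεdef
  have hεpos : 0 < ε := by positivity
  have hfam : ∀ p : ℤ × ℤ, ∃ C : ℝ, 0 ≤ C ∧
      (p.1 ≠ 0 → ∀ n : ℕ, ‖T f p.1 p.2 n‖ ≤ ε * n + C) := by
    intro p
    by_cases hp : p.1 = 0
    · exact ⟨0, le_refl _, fun h => absurd hp h⟩
    · obtain ⟨C, hC0, hC⟩ := exists_bound f hf p.1 p.2 (H p.1 p.2 hp) hεpos
      exact ⟨C, hC0, fun _ => hC⟩
  choose g hg0 hg using hfam
  set F : Finset (ℤ × ℤ) :=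
    (Finset.Icc (-(A:ℤ)) (A:ℤ)) ×ˢ (Finset.Icc (-(2*A:ℤ)) (2*A:ℤ)) with hF
  set C : ℝ := ∑ p ∈ F, g p with hCdef
  have hC0 : 0 ≤ C := Finset.sum_nonneg fun p _ => hg0 p
  have hC : ∀ a' b' : ℤ, a' ≠ 0 → |a'| ≤ (A:ℤ) → |b'| ≤ 2*(A:ℤ) →
      ∀ n : ℕ, ‖T f a' b' n‖ ≤ ε * n + C := by
    intro a' b' ha' haA hbA n
    have hmem : (a', b') ∈ F := by
      rw [hF]
      simp only [Finset.mem_product, Finset.mem_Icc]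
      exact ⟨abs_le.mp haA, abs_le.mp hbA⟩
    calc ‖T f a' b' n‖ ≤ ε * n + g (a', b') := hg (a', b') ha' n
      _ ≤ ε * n + C := by
          have := Finset.single_le_sum (f := g) (fun q _ => hg0 q) hmem
          rw [hCdef]; linarith
  set N₀ : ℕ := ⌈(1 + ε₀ * (2*A+1)/4 + 2*C)/ε₀⌉₊ + 1 with hN₀def
  refine ⟨N₀, fun N hN L a b ha => ?_⟩
  have hNbig : 1 + ε₀ * (2*A+1)/4 + 2*C ≤ ε₀ * N := by
    have h1 : (1 + ε₀ * (2*A+1)/4 + 2*C)/ε₀ ≤ (N₀:ℝ) := by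
      calc (1 + ε₀ * (2*A+1)/4 + 2*C)/ε₀ ≤ (⌈(1 + ε₀ * (2*A+1)/4 + 2*C)/ε₀⌉₊ : ℝ) :=
            Nat.le_ceil _
        _ ≤ (N₀:ℝ) := by rw [hN₀def]; push_cast; linarith
    have h2 : (N₀:ℝ) ≤ N := by exact_mod_cast hN
    rw [div_le_iff₀ hε₀] at h1
    nlinarith
  have hε₀N1 : 1 ≤ ε₀ * N := by nlinarith [mul_nonneg (mul_nonneg hε₀.le (by positivity : (0:ℝ) ≤ 2*(A:ℝ)+1)) (by norm_num : (0:ℝ) ≤ 1/4)]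
  clear_value A ε F C N₀
  rw [ind_sum f N L a b ha]
  by_cases hne : (Finset.filter
      (fun m : ℕ => -(N:ℤ) ≤ a * m + b ∧ a * m + b ≤ (N:ℤ)) (Finset.range L)).Nonempty
  swap
  · rw [Finset.not_nonempty_iff_eq_empty] at hne
    rw [hne, Finset.sum_empty, mul_zero, norm_zero]
    exact hε₀.le
  set s := Finset.filter
      (fun m : ℕ => -(N:ℤ) ≤ a * m + b ∧ a * m + b ≤ (N:ℤ)) (Finset.range L) with hs_def
  set m₀ := s.min' hne with hm₀def
  set m₁ := s.max' hne with hm₁def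
  have hsIcc := filter_eq_Icc (N := N) (L := L) ha s hs_def hne
  rw [hsIcc]
  have hmem : ∀ x : ℕ, x ∈ s → x < L ∧ -(N:ℤ) ≤ a*x+b ∧ a*x+b ≤ (N:ℤ) := by
    intro x hx
    rw [hs_def] at hx
    simpa [Finset.mem_filter, Finset.mem_range] using hx
  obtain ⟨hL0, ha0, hb0⟩ := hmem m₀ (s.min'_mem hne)
  obtain ⟨hL1, ha1, hb1⟩ := hmem m₁ (s.max'_mem hne)
  have h01 : m₀ ≤ m₁ := Finset.min'_le s m₁ (s.max'_mem hne)
  set M : ℕ := m₁ + 1 - m₀ with hM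
  set b' : ℤ := a * m₀ + b with hb'def
  have hsum : ∑ m ∈ Finset.Icc m₀ m₁, f (a * m + b) = T f a b' M := by
    rw [← Finset.Ico_add_one_right_eq_Icc, Finset.sum_Ico_eq_sum_range]
    apply Finset.sum_congr rfl
    intro k _
    congr 1
    rw [hb'def]
    push_cast
    ring
  rw [hsum, prefactor]
  have h2Npos : (0:ℝ) < 2*(N:ℝ)+1 := by positivity
  rw [one_div, inv_mul_le_iff₀ h2Npos]
  have hM1 : 1 ≤ M := by omega
  have hMa : ((M:ℤ) - 1) * |a| ≤ 2*(N:ℤ) := by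
    have e2 : a * ((m₁:ℤ) - m₀) = (a*(m₁:ℤ)+b) - (a*(m₀:ℤ)+b) := by ring
    have e1 : |a * ((m₁:ℤ) - m₀)| ≤ 2*(N:ℤ) := by
      rw [e2]
      calc |(a*(m₁:ℤ)+b) - (a*(m₀:ℤ)+b)| ≤ |a*(m₁:ℤ)+b| + |a*(m₀:ℤ)+b| := abs_sub _ _
        _ ≤ (N:ℤ) + (N:ℤ) := add_le_add (abs_le.mpr ⟨by linarith, hb1⟩)
            (abs_le.mpr ⟨by linarith, hb0⟩)
        _ = 2*(N:ℤ) := by ring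
    have hmm : (0:ℤ) ≤ (m₁:ℤ) - (m₀:ℤ) := by omega
    rw [abs_mul, abs_of_nonneg hmm] at e1
    calc ((M:ℤ) - 1) * |a| = ((m₁:ℤ) - m₀) * |a| := by
          congr 1; omega
      _ = |a| * ((m₁:ℤ) - m₀) := mul_comm _ _
      _ ≤ 2*(N:ℤ) := e1
  have hb'le : -(N:ℤ) ≤ b' ∧ b' ≤ (N:ℤ) := ⟨ha0, hb0⟩
  clear_value b' M m₁ m₀ s
  by_cases haA : |a| ≤ (A:ℤ)
  · -- small step case
    set aA : ℤ := |a| with haAdef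
    have haA0 : 0 < aA := abs_pos.mpr ha
    set r : ℤ := b' % aA with hrdef
    have hr0 : 0 ≤ r := Int.emod_nonneg _ (by omega)
    have hrA : r < aA := Int.emod_lt_of_pos _ haA0
    have hdiv : aA * (b' / aA) + r = b' := Int.mul_ediv_add_emod b' aA
    obtain ⟨q, hq⟩ : ∃ q : ℤ, a * q = aA * (b' / aA) := by
      rcases abs_choice a with h | h
      · exact ⟨b' / aA, by rw [haAdef, h]⟩
      · exact ⟨-(b' / aA), by rw [haAdef, h]; ring⟩
    have hqb : a * q + r = b' := by rw [hq]; exact hdiv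
    have hTE : T f a b' M = E f a r (q + M) - E f a r q := by
      rw [← hqb]; exact T_eq_E f a r q M
    have hbound1 : ∀ n : ℕ, ‖T f a r n‖ ≤ ε*n + C := by
      apply hC a r ha haA
      rw [abs_of_nonneg hr0]
      omega
    have hbound2 : ∀ n : ℕ, ‖T f (-a) (r - a) n‖ ≤ ε*n + C := by
      apply hC (-a) (r - a) (neg_ne_zero.mpr ha) (by rw [abs_neg]; exact haA)
      have h1 : |r - a| ≤ |r| + |a| := abs_sub r a
      rw [abs_of_nonneg hr0] at h1
      omega
    have hE1 := E_abs_le f hbound1 hbound2 (q + M)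
    have hE2 := E_abs_le f hbound1 hbound2 q
    have hq1 : |q| ≤ (N:ℤ) + A := by
      have h1 : |a| * |q| = |b' - r| := by
        rw [← abs_mul]; congr 1; linarith [hqb]
      have hb'abs : |b'| ≤ (N:ℤ) := abs_le.mpr ⟨hb'le.1, hb'le.2⟩
      have h2 : |b' - r| ≤ (N:ℤ) + A := by
        have h3 : |b' - r| ≤ |b'| + |r| := abs_sub b' r
        rw [abs_of_nonneg hr0] at h3
        omega
      have h4 : 1 * |q| ≤ |a| * |q| :=
        mul_le_mul_of_nonneg_right (Int.one_le_abs ha) (abs_nonneg q)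
      linarith
    have hM2 : (M:ℤ) ≤ 2*(N:ℤ) + 1 := by
      have h4 : ((M:ℤ) - 1) * 1 ≤ ((M:ℤ) - 1) * |a| :=
        mul_le_mul_of_nonneg_left (Int.one_le_abs ha) (by omega)
      linarith
    have hqM : |q + (M:ℤ)| ≤ 3*(N:ℤ) + A + 1 := by
      have h1 : |q + (M:ℤ)| ≤ |q| + |(M:ℤ)| := abs_add_le _ _
      rw [abs_of_nonneg (by positivity : (0:ℤ) ≤ (M:ℤ))] at h1
      omega
    -- to reals
    have hc1 : (((q + (M:ℤ)).natAbs : ℝ)) ≤ 3*(N:ℝ) + A + 1 := by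
      have := hqM
      rw [← Int.natCast_natAbs] at this
      exact_mod_cast this
    have hc2 : ((q.natAbs : ℝ)) ≤ (N:ℝ) + A := by
      have := hq1
      rw [← Int.natCast_natAbs] at this
      exact_mod_cast this
    have hS : ‖T f a b' M‖ ≤
        ε * (((q + (M:ℤ)).natAbs : ℝ) + (q.natAbs : ℝ)) + 2*C := by
      rw [hTE]
      calc ‖E f a r (q + M) - E f a r q‖
          ≤ ‖E f a r (q + M)‖ + ‖E f a r q‖ := by
            rw [sub_eq_add_neg]
            calc ‖E f a r (q + M) + -(E f a r q)‖
                ≤ ‖E f a r (q + M)‖ + ‖-(E f a r q)‖ :=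
                  norm_add_le _ _
              _ = _ := by rw [norm_neg]
        _ ≤ _ := by rw [mul_add]; linarith [hE1, hE2]
    calc ‖T f a b' M‖
        ≤ ε * (((q + (M:ℤ)).natAbs : ℝ) + (q.natAbs : ℝ)) + 2*C := hS
      _ ≤ ε * ((3*(N:ℝ) + A + 1) + ((N:ℝ) + A)) + 2*C := by
          have h4 := mul_le_mul_of_nonneg_left (add_le_add hc1 hc2) hεpos.le
          linarith
      _ = ε₀ * N + (ε₀ * (2*A+1)/4 + 2*C) := by rw [hεdef]; ring
      _ ≤ ε₀ * N + ε₀ * N := by linarith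
      _ ≤ (2*(N:ℝ)+1) * ε₀ := by
          have h4 : (2*(N:ℝ)+1) * ε₀ = 2*(ε₀*N) + ε₀ := by ring
          linarith
  · -- big step case
    have hS : ‖T f a b' M‖ ≤ (M:ℝ) := T_abs_le f hf a b' M
    have h2 : (A:ℤ) + 1 ≤ |a| := by omega
    have hεA : 2 ≤ ε₀ * A := by
      rw [div_le_iff₀ hε₀] at hA2
      linarith [mul_comm ε₀ (A:ℝ) ▸ hA2]
    have hMR : ((M:ℝ) - 1) * ((|a| : ℤ) : ℝ) ≤ 2*(N:ℝ) := by exact_mod_cast hMa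
    have hAa : ((A:ℝ) + 1) ≤ ((|a| : ℤ) : ℝ) := by exact_mod_cast h2
    have hM1R : (1:ℝ) ≤ (M:ℝ) := by exact_mod_cast hM1
    have hMf : (M:ℝ) ≤ ε₀ * N + 1 := by
      have h3 : ε₀*((A:ℝ)+1) ≤ ε₀*(((|a| : ℤ):ℝ)) := mul_le_mul_of_nonneg_left hAa hε₀.le
      have h3' : ε₀*((A:ℝ)+1) = ε₀*(A:ℝ) + ε₀ := by ring
      have h4 : 2 ≤ ε₀*(((|a| : ℤ):ℝ)) := by linarith
      have h5 : ((M:ℝ) - 1)*2 ≤ ((M:ℝ) - 1)*(ε₀*(((|a| : ℤ):ℝ))) :=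
        mul_le_mul_of_nonneg_left h4 (by linarith)
      have h6 : ε₀*(((M:ℝ) - 1)*(((|a| : ℤ):ℝ))) ≤ ε₀*(2*(N:ℝ)) :=
        mul_le_mul_of_nonneg_left hMR hε₀.le
      have h7 : ((M:ℝ) - 1)*(ε₀*(((|a| : ℤ):ℝ))) = ε₀*(((M:ℝ) - 1)*(((|a| : ℤ):ℝ))) := by ring
      linarith
    calc ‖T f a b' M‖ ≤ (M:ℝ) := hS
      _ ≤ ε₀ * N + 1 := hMf
      _ ≤ (2*(N:ℝ)+1) * ε₀ := by
          have h4 : (2*(N:ℝ)+1) * ε₀ = 2*(ε₀*N) + ε₀ := by ring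
          linarith

end Stmt15Aux


/-- For `f : ℤ → ℂ` with `|f| ≤ 1`, aperiodicity along all (infinite)
arithmetic progressions is equivalent to uniform smallness of the averages of `f`
over all finite arithmetic progressions `P_{a,b,L} = {am+b : 0 ≤ m < L}` inside
`[−N, N]`. -/
theorem stmt15 (f : ℤ → ℂ) (hf : ∀ n, ‖f n‖ ≤ 1) :
    (∀ a b : ℤ, a ≠ 0 →
      Tendsto (fun N : ℕ => (1 / (N : ℂ)) * ∑ n ∈ Finset.range N, f (a * n + b))
        atTop (nhds 0)) ↔
    (∀ ε : ℝ, 0 < ε → ∃ N₀ : ℕ, ∀ N : ℕ, N₀ ≤ N →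
      ∀ (L : ℕ) (a b : ℤ), a ≠ 0 →
        ‖(1 / (2 * (N : ℂ) + 1)) *
            ∑ n ∈ Finset.Icc (-(N : ℤ)) (N : ℤ),
              Set.indicator {x : ℤ | ∃ m : ℕ, m < L ∧ x = a * m + b} f n‖ ≤ ε) := by
  constructor
  · exact fun H => Stmt15Aux.forward_aux f hf H
  · exact fun H a b ha => Stmt15Aux.backward_aux f hf H a b ha
end
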